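/- arXiv:1705.01623 — 12 statements merged into one kernel-verified Lean document; each statement's English description precedes it below -/
import Mathlib

section
/- Every term of the Somos-4 sequence is a positive integer. That is, if (a_n)_{n≥1} is the sequence of rational numbers defined by a_1 = a_2 = a_3 = a_4 = 1 and a_{n+4} = (a_{n+3}·a_{n+1} + a_{n+2}^2)/a_n for all n ≥ 1, then for every n ≥ 1 the number a_n is a positive integer (in particular a_n ≠ 0, so the recurrence is well defined). -/
/-- Key divisibility lemma for the Somos-4 step. -/
lemma somos4_key (k0 k1 k2 k3 k4 k5 k6 k7 : ℤ)
    (R0 : k4 * k0 = k3 * k1 + k2 ^ 2) (R1 : k5 * k1 = k4 * k2 + k3 ^ 2)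
    (R2 : k6 * k2 = k5 * k3 + k4 ^ 2) (R3 : k7 * k3 = k6 * k4 + k5 ^ 2)
    (c1 : IsCoprime k4 k1) (c2 : IsCoprime k4 k2) (c3 : IsCoprime k4 k3) :
    k4 ∣ k7 * k5 + k6 ^ 2 := by
  have hd : k4 ∣ (k1 ^ 3 * (k2 ^ 2 * k3)) * (k7 * k5 + k6 ^ 2) := by
    refine ⟨k1 ^ 3 * k2 ^ 2 * k5 * k6 + k4 * k1 ^ 3 * k3 * (2 * k5 * k3 + k4 ^ 2)
      + k2 ^ 3 * (k4 ^ 2 * k2 ^ 2 + 3 * k4 * k2 * k3 ^ 2 + 3 * k3 ^ 4)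
      + k1 * k2 * k3 ^ 3 * (k4 * k2 + 2 * k3 ^ 2) + k3 ^ 6 * k0, ?_⟩
    linear_combination (-(k3 ^ 6)) * R0
      + (k2 ^ 2 * ((k5 * k1) ^ 2 + (k5 * k1) * (k4 * k2 + k3 ^ 2) + (k4 * k2 + k3 ^ 2) ^ 2)
          + k1 * k3 ^ 3 * (k5 * k1 + k4 * k2 + k3 ^ 2)) * R1
      + (k1 ^ 3 * k3 * (k6 * k2 + k5 * k3 + k4 ^ 2)) * R2
      + (k1 ^ 3 * k2 ^ 2 * k5) * R3
  have hco : IsCoprime k4 (k1 ^ 3 * (k2 ^ 2 * k3)) :=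
    (c1.pow_right).mul_right ((c2.pow_right).mul_right c3)
  exact hco.dvd_of_dvd_mul_left hd

/-- Every term of the Somos-4 sequence is a positive integer. -/
theorem somos4_positive_integer (a : ℕ → ℚ)
    (h1 : a 1 = 1) (h2 : a 2 = 1) (h3 : a 3 = 1) (h4 : a 4 = 1)
    (hrec : ∀ n, 1 ≤ n →
      a (n + 4) = (a (n + 3) * a (n + 1) + a (n + 2) ^ 2) / a n) :
    ∀ n, 1 ≤ n → ∃ k : ℤ, 0 < k ∧ a n = (k : ℚ) := by
  have h5 : a 5 = 2 := by
    have h := hrec 1 (by norm_num); norm_num [h1, h2, h3, h4] at h; exact h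
  have h6 : a 6 = 3 := by
    have h := hrec 2 (by norm_num); norm_num [h2, h3, h4, h5] at h; exact h
  have h7 : a 7 = 7 := by
    have h := hrec 3 (by norm_num); norm_num [h3, h4, h5, h6] at h; exact h
  have h8 : a 8 = 23 := by
    have h := hrec 4 (by norm_num); norm_num [h4, h5, h6, h7] at h; exact h
  set b : ℕ → ℤ := fun m => (a m).num with hb
  have hbn : ∀ m : ℕ, ∀ z : ℤ, a m = (z : ℚ) → b m = z := by
    intro m z hm; rw [hb]; simp [hm]
  have hb1 : b 1 = 1 := hbn 1 1 (by rw [h1]; norm_num)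
  have hb2 : b 2 = 1 := hbn 2 1 (by rw [h2]; norm_num)
  have hb3 : b 3 = 1 := hbn 3 1 (by rw [h3]; norm_num)
  have hb4 : b 4 = 1 := hbn 4 1 (by rw [h4]; norm_num)
  have hb5 : b 5 = 2 := hbn 5 2 (by rw [h5]; norm_num)
  have hb6 : b 6 = 3 := hbn 6 3 (by rw [h6]; norm_num)
  have hb7 : b 7 = 7 := hbn 7 7 (by rw [h7]; norm_num)
  have hb8 : b 8 = 23 := hbn 8 23 (by rw [h8]; norm_num)
  have main : ∀ n, 1 ≤ n →
      (∀ i, n ≤ i → i ≤ n + 7 → 0 < b i ∧ a i = (b i : ℚ)) ∧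
      (∀ i j, n ≤ i → i < j → j ≤ i + 3 → j ≤ n + 7 → IsCoprime (b i) (b j)) := by
    intro n hn
    induction n, hn using Nat.le_induction with
    | base =>
      constructor
      · intro i h1i h2i
        interval_cases i <;>
          norm_num [hb1, hb2, hb3, hb4, hb5, hb6, hb7, hb8, h1, h2, h3, h4, h5, h6, h7, h8]
      · intro i j hi hij hj3 hj7
        have hi8 : i ≤ 8 := by omega
        have hj8 : j ≤ 8 := by omega
        interval_cases i <;> interval_cases j <;>
          simp only [hb1, hb2, hb3, hb4, hb5, hb6, hb7, hb8] <;>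
          rw [Int.isCoprime_iff_gcd_eq_one] <;> decide
    | succ n hn ih =>
      obtain ⟨ihv, ihc⟩ := ih
      have e : ∀ i, n ≤ i → i ≤ n + 7 → a i = (b i : ℚ) := fun i h h' => (ihv i h h').2
      have p : ∀ i, n ≤ i → i ≤ n + 7 → 0 < b i := fun i h h' => (ihv i h h').1
      have R : ∀ m, n ≤ m → m + 4 ≤ n + 7 →
          b (m + 4) * b m = b (m + 3) * b (m + 1) + b (m + 2) ^ 2 := by
        intro m hm hm7
        have hr := hrec m (le_trans hn hm)
        rw [e m hm (by omega), e (m + 1) (by omega) (by omega),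
          e (m + 2) (by omega) (by omega), e (m + 3) (by omega) (by omega),
          e (m + 4) (by omega) (by omega)] at hr
        have h0 : ((b m : ℚ)) ≠ 0 := by
          exact_mod_cast (p m hm (by omega)).ne'
        rw [eq_div_iff h0] at hr
        exact_mod_cast hr
      have R0 := R n le_rfl (by omega)
      have R1 := R (n + 1) (by omega) (by omega)
      have R2 := R (n + 2) (by omega) (by omega)
      have R3 := R (n + 3) (by omega) (by omega)
      have c41 : IsCoprime (b (n + 4)) (b (n + 1)) :=
        (ihc (n + 1) (n + 4) (by omega) (by omega) (by omega) (by omega)).symm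
      have c42 : IsCoprime (b (n + 4)) (b (n + 2)) :=
        (ihc (n + 2) (n + 4) (by omega) (by omega) (by omega) (by omega)).symm
      have c43 : IsCoprime (b (n + 4)) (b (n + 3)) :=
        (ihc (n + 3) (n + 4) (by omega) (by omega) (by omega) (by omega)).symm
      have hdvd : b (n + 4) ∣ b (n + 7) * b (n + 5) + b (n + 6) ^ 2 :=
        somos4_key (b n) (b (n + 1)) (b (n + 2)) (b (n + 3)) (b (n + 4)) (b (n + 5))
          (b (n + 6)) (b (n + 7))
          (by linear_combination R0) (by linear_combination R1)
          (by linear_combination R2) (by linear_combination R3) c41 c42 c43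
      obtain ⟨k8, hk8⟩ := hdvd
      have p4 := p (n + 4) (by omega) (by omega)
      have p5 := p (n + 5) (by omega) (by omega)
      have p6 := p (n + 6) (by omega) (by omega)
      have p7 := p (n + 7) (by omega) (by omega)
      have hk8pos : 0 < k8 := by nlinarith [hk8, p4, p5, p6, p7]
      have ha8 : a (n + 8) = (k8 : ℚ) := by
        have hr := hrec (n + 4) (by omega)
        rw [show n + 4 + 4 = n + 8 by omega, show n + 4 + 3 = n + 7 by omega,
          show n + 4 + 2 = n + 6 by omega, show n + 4 + 1 = n + 5 by omega] at hr
        rw [e (n + 4) (by omega) (by omega), e (n + 5) (by omega) (by omega),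
          e (n + 6) (by omega) (by omega), e (n + 7) (by omega) (by omega)] at hr
        rw [hr]
        have h0 : ((b (n + 4) : ℚ)) ≠ 0 := by exact_mod_cast p4.ne'
        rw [div_eq_iff h0]
        have h' : (b (n + 7) * b (n + 5) + b (n + 6) ^ 2 : ℤ) = k8 * b (n + 4) := by
          linear_combination hk8
        exact_mod_cast h'
      have hb8' : b (n + 8) = k8 := hbn (n + 8) k8 ha8
      constructor
      · intro i h1i h2i
        by_cases hi8 : i = n + 8
        · subst hi8
          exact ⟨by rw [hb8']; exact hk8pos, by rw [hb8']; exact ha8⟩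
        · exact ihv i (by omega) (by omega)
      · intro i j hi hij hj3 hj7
        by_cases hj8 : j = n + 8
        · subst hj8
          rw [hb8']
          have c56 : IsCoprime (b (n + 5)) (b (n + 6)) :=
            ihc (n + 5) (n + 6) (by omega) (by omega) (by omega) (by omega)
          have c57 : IsCoprime (b (n + 5)) (b (n + 7)) :=
            ihc (n + 5) (n + 7) (by omega) (by omega) (by omega) (by omega)
          have c67 : IsCoprime (b (n + 6)) (b (n + 7)) :=
            ihc (n + 6) (n + 7) (by omega) (by omega) (by omega) (by omega)
          have hi' : i = n + 5 ∨ i = n + 6 ∨ i = n + 7 := by omega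
          rcases hi' with hi' | hi' | hi' <;> subst hi'
          · have H : IsCoprime (b (n + 5)) (b (n + 6) ^ 2 + b (n + 5) * b (n + 7)) :=
              (c56.pow_right).add_mul_left_right (b (n + 7))
            have heq : b (n + 6) ^ 2 + b (n + 5) * b (n + 7) = b (n + 4) * k8 := by
              linear_combination hk8
            rw [heq] at H
            exact H.of_mul_right_right
          · have H : IsCoprime (b (n + 6)) (b (n + 7) * b (n + 5) + b (n + 6) * b (n + 6)) :=
              (c67.mul_right c56.symm).add_mul_left_right (b (n + 6))
            have heq : b (n + 7) * b (n + 5) + b (n + 6) * b (n + 6) = b (n + 4) * k8 := by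
              linear_combination hk8
            rw [heq] at H
            exact H.of_mul_right_right
          · have H : IsCoprime (b (n + 7)) (b (n + 6) ^ 2 + b (n + 7) * b (n + 5)) :=
              (c67.symm.pow_right).add_mul_left_right (b (n + 5))
            have heq : b (n + 6) ^ 2 + b (n + 7) * b (n + 5) = b (n + 4) * k8 := by
              linear_combination hk8
            rw [heq] at H
            exact H.of_mul_right_right
        · exact ihc i j (by omega) hij hj3 (by omega)
  intro n hn
  obtain ⟨hv, -⟩ := main n hn
  obtain ⟨hp, he⟩ := hv n le_rfl (by omega)
  exact ⟨b n, hp, he⟩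
end

section
/- The linearization of the Somos-4 recurrence produces integer sequences for arbitrary integer initial conditions: let (a_n)_{n≥1} be the Somos-4 sequence, let b_1, b_2, b_3, b_4 be arbitrary integers, and define rational numbers b_n for n ≥ 5 by b_{n+4} = (a_{n+1}·b_{n+3} + 2·a_{n+2}·b_{n+2} + a_{n+3}·b_{n+1} − a_{n+4}·b_n)/a_n. Then b_n is an integer for every n ≥ 1. -/
open TrivSqZeroExt

namespace Somos4Aux

/-- `smk x y` is `x + y ε` in the dual numbers over `ℤ`. -/
def smk (x y : ℤ) : DualNumber ℤ := inl x + inl y * DualNumber.eps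

@[simp] lemma smk_fst (x y : ℤ) : (smk x y).fst = x := by
  simp [smk]

@[simp] lemma smk_snd (x y : ℤ) : (smk x y).snd = y := by
  simp [smk, DualNumber.snd_mul]

lemma smk_surj (z : DualNumber ℤ) : smk z.fst z.snd = z :=
  TrivSqZeroExt.ext (by simp) (by simp [DualNumber.snd_mul])

lemma smk_eq_iff {x y u v : ℤ} : smk x y = smk u v ↔ x = u ∧ y = v := by
  constructor
  · intro h
    exact ⟨by simpa using congrArg TrivSqZeroExt.fst h,
      by simpa using congrArg TrivSqZeroExt.snd h⟩
  · rintro ⟨rfl, rfl⟩; rfl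

lemma smk_mul (x y u v : ℤ) : smk x y * smk u v = smk (x*u) (x*v + y*u) :=
  TrivSqZeroExt.ext (by simp) (by simp [DualNumber.snd_mul]; try ring)

lemma smk_add (x y u v : ℤ) : smk x y + smk u v = smk (x+u) (y+v) :=
  TrivSqZeroExt.ext (by simp) (by simp [DualNumber.snd_mul])

lemma smk_one : smk 1 0 = 1 :=
  TrivSqZeroExt.ext (by simp) (by simp [DualNumber.snd_mul])

lemma smk_unit_dvd (y : ℤ) (w : DualNumber ℤ) : smk 1 y ∣ w :=
  ⟨smk 1 (-y) * w, by rw [← mul_assoc, smk_mul]; norm_num [smk_one]⟩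

lemma coprime_lift {x y : DualNumber ℤ} (h : IsCoprime x.fst y.fst) :
    IsCoprime x y := by
  obtain ⟨c, d, hcd⟩ := h
  set w : DualNumber ℤ := inl c * x + inl d * y with hw
  have hwf : w.fst = 1 := by simp [hw, hcd]
  have hwu : (2 - w) * w = 1 := by
    obtain ⟨k, hk⟩ : ∃ k, w = smk 1 k := ⟨w.snd, by conv_lhs => rw [← smk_surj w, hwf]⟩
    rw [hk]
    have h2 : (2 : DualNumber ℤ) = smk 2 0 := by
      rw [show (2:ℤ) = 1 + 1 by norm_num, show (0:ℤ) = 0 + 0 by norm_num,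
        ← smk_add, smk_one]; norm_num
    rw [h2, show smk 2 0 - smk 1 k = smk 1 (-k) from
      TrivSqZeroExt.ext (by simp) (by simp), smk_mul]
    simpa using smk_one
  exact ⟨(2 - w) * inl c, (2 - w) * inl d, by
    rw [mul_assoc, mul_assoc, ← mul_add, ← hw, hwu]⟩

/-- The key divisibility step for Somos-4 over a commutative ring. -/
lemma key_dvd (p q r s t u v w : DualNumber ℤ)
    (e1 : t * p = s * q + r^2) (e2 : u * q = t * r + s^2)
    (e3 : v * r = u * s + t^2) (e4 : w * s = v * t + u^2)
    (cq : IsCoprime t q) (cr : IsCoprime t r) (cs : IsCoprime t s) :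
    t ∣ w * u + v^2 := by
  have hid : (w*u + v^2) * (q^2*r^2*s)
      = t * (q*r^2*(t*r*v + r*u^2 + s^2*v) + q^2*s*t*(2*u*s+t^2) + p*q*s^2*u^2) := by
    linear_combination (q*r^2*q*u) * e4 + (q*r^2*(t*v+u^2)) * e2
      + (q^2*s*(v*r+u*s+t^2)) * e3 - (q*s^2*u^2) * e1
  have hc : IsCoprime t (q^2*r^2*s) :=
    ((cq.pow_right).mul_right (cr.pow_right)).mul_right cs
  exact hc.dvd_of_dvd_mul_right ⟨_, hid⟩

end Somos4Aux

open Somos4Aux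

/-- The linearization of the Somos-4 recurrence produces integer sequences
for arbitrary integer initial conditions. -/
theorem somos4_linearization_integer (a : ℕ → ℚ)
    (h1 : a 1 = 1) (h2 : a 2 = 1) (h3 : a 3 = 1) (h4 : a 4 = 1)
    (hrec : ∀ n, 1 ≤ n →
      a (n + 4) = (a (n + 3) * a (n + 1) + a (n + 2) ^ 2) / a n)
    (b : ℕ → ℚ) (b1 b2 b3 b4 : ℤ)
    (hb1 : b 1 = (b1 : ℚ)) (hb2 : b 2 = (b2 : ℚ)) (hb3 : b 3 = (b3 : ℚ)) (hb4 : b 4 = (b4 : ℚ))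
    (hbrec : ∀ n, 1 ≤ n →
      b (n + 4) = (a (n + 1) * b (n + 3) + 2 * a (n + 2) * b (n + 2)
        + a (n + 3) * b (n + 1) - a (n + 4) * b n) / a n) :
    ∀ n, 1 ≤ n → ∃ k : ℤ, b n = (k : ℚ) := by
  have key : ∀ m, 1 ≤ m → (a m = ((a m).num : ℚ) ∧ b m = ((b m).num : ℚ)
      ∧ 0 < (a m).num
      ∧ ∀ j, 1 ≤ j → j < m → m ≤ j + 3 → IsCoprime ((a j).num) ((a m).num)) := by
    intro m
    induction m using Nat.strong_induction_on with
    | _ m ih =>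
    intro hm
    rcases le_or_gt m 4 with hm4 | hm5
    · -- base cases m = 1,2,3,4
      have ha1 : a m = 1 := by interval_cases m <;> assumption
      have hb1' : ∃ k : ℤ, b m = (k : ℚ) := by
        interval_cases m
        exacts [⟨b1, hb1⟩, ⟨b2, hb2⟩, ⟨b3, hb3⟩, ⟨b4, hb4⟩]
      obtain ⟨k, hk⟩ := hb1'
      refine ⟨by rw [ha1]; norm_num, by rw [hk, Rat.num_intCast], by rw [ha1]; norm_num,
        fun j _ _ _ => by rw [ha1]; simpa using isCoprime_one_right⟩
    · -- main step : m = n + 4, n ≥ 1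
      obtain ⟨n, rfl⟩ : ∃ n, m = n + 4 := ⟨m - 4, by omega⟩
      have hn : 1 ≤ n := by omega
      have ihP : ∀ k, 1 ≤ k → k ≤ n + 3 → (a k = ((a k).num : ℚ) ∧ b k = ((b k).num : ℚ)
          ∧ 0 < (a k).num
          ∧ ∀ j, 1 ≤ j → j < k → k ≤ j + 3 → IsCoprime ((a j).num) ((a k).num)) :=
        fun k hk1 hk2 => ih k (by omega) hk1
      have haI : ∀ k, 1 ≤ k → k ≤ n + 3 → a k = ((a k).num : ℚ) :=
        fun k hk1 hk2 => (ihP k hk1 hk2).1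
      have hbI : ∀ k, 1 ≤ k → k ≤ n + 3 → b k = ((b k).num : ℚ) :=
        fun k hk1 hk2 => (ihP k hk1 hk2).2.1
      have hpos : ∀ k, 1 ≤ k → k ≤ n + 3 → 0 < (a k).num :=
        fun k hk1 hk2 => (ihP k hk1 hk2).2.2.1
      have hcop : ∀ k, 1 ≤ k → k ≤ n + 3 →
          ∀ j, 1 ≤ j → j < k → k ≤ j + 3 → IsCoprime ((a j).num) ((a k).num) :=
        fun k hk1 hk2 => (ihP k hk1 hk2).2.2.2
      have hane : ∀ k, 1 ≤ k → k ≤ n + 3 → a k ≠ 0 := fun k hk1 hk2 => by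
        rw [haI k hk1 hk2]
        exact_mod_cast (hpos k hk1 hk2).ne'
      -- integer relations
      have hZrel : ∀ k, 1 ≤ k → k + 4 ≤ n + 3 →
          (a (k+4)).num * (a k).num
            = (a (k+3)).num * (a (k+1)).num + (a (k+2)).num ^ 2 := by
        intro k hk1 hk2
        have h := hrec k hk1
        rw [eq_div_iff (hane k hk1 (by omega))] at h
        rw [haI (k+4) (by omega) hk2, haI (k+3) (by omega) (by omega),
          haI (k+1) (by omega) (by omega), haI (k+2) (by omega) (by omega),
          haI k hk1 (by omega)] at h
        exact_mod_cast h
      have hZrelb : ∀ k, 1 ≤ k → k + 4 ≤ n + 3 →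
          (b (k+4)).num * (a k).num
            = (a (k+1)).num * (b (k+3)).num + 2 * (a (k+2)).num * (b (k+2)).num
              + (a (k+3)).num * (b (k+1)).num - (a (k+4)).num * (b k).num := by
        intro k hk1 hk2
        have h := hbrec k hk1
        rw [eq_div_iff (hane k hk1 (by omega))] at h
        rw [haI (k+4) (by omega) hk2, haI (k+3) (by omega) (by omega),
          haI (k+1) (by omega) (by omega), haI (k+2) (by omega) (by omega),
          haI k hk1 (by omega), hbI (k+4) (by omega) hk2, hbI (k+3) (by omega) (by omega),
          hbI (k+1) (by omega) (by omega), hbI (k+2) (by omega) (by omega),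
          hbI k hk1 (by omega)] at h
        exact_mod_cast h
      -- dual number relations
      have hRrel : ∀ k, 1 ≤ k → k + 4 ≤ n + 3 →
          smk ((a (k+4)).num) ((b (k+4)).num) * smk ((a k).num) ((b k).num)
            = smk ((a (k+3)).num) ((b (k+3)).num) * smk ((a (k+1)).num) ((b (k+1)).num)
              + smk ((a (k+2)).num) ((b (k+2)).num) ^ 2 := by
        intro k hk1 hk2
        rw [pow_two, smk_mul, smk_mul, smk_mul, smk_add, smk_eq_iff]
        exact ⟨by linear_combination hZrel k hk1 hk2, by linear_combination hZrelb k hk1 hk2⟩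
      -- the key divisibility
      have hdvd : smk ((a n).num) ((b n).num) ∣
          smk ((a (n+3)).num) ((b (n+3)).num) * smk ((a (n+1)).num) ((b (n+1)).num)
            + smk ((a (n+2)).num) ((b (n+2)).num) ^ 2 := by
        rcases le_or_gt n 4 with hn4 | hn5
        · have hXn1 : (a n).num = 1 := by
            have : a n = 1 := by interval_cases n <;> assumption
            rw [this]; norm_num
          rw [hXn1]
          exact smk_unit_dvd _ _
        · obtain ⟨j, rfl⟩ : ∃ j, n = j + 5 := ⟨n - 5, by omega⟩
          rw [show j + 5 + 3 = j + 8 from by omega, show j + 5 + 1 = j + 6 from by omega,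
            show j + 5 + 2 = j + 7 from by omega]
          refine key_dvd (smk ((a (j+1)).num) ((b (j+1)).num))
            (smk ((a (j+2)).num) ((b (j+2)).num)) (smk ((a (j+3)).num) ((b (j+3)).num))
            (smk ((a (j+4)).num) ((b (j+4)).num)) _
            (smk ((a (j+6)).num) ((b (j+6)).num)) (smk ((a (j+7)).num) ((b (j+7)).num))
            (smk ((a (j+8)).num) ((b (j+8)).num)) ?_ ?_ ?_ ?_ ?_ ?_ ?_
          · exact hRrel (j+1) (by omega) (by omega)
          · exact hRrel (j+2) (by omega) (by omega)
          · exact hRrel (j+3) (by omega) (by omega)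
          · exact hRrel (j+4) (by omega) (by omega)
          · exact coprime_lift (by
              rw [smk_fst, smk_fst]
              exact (hcop (j+5) (by omega) (by omega) (j+2) (by omega) (by omega) (by omega)).symm)
          · exact coprime_lift (by
              rw [smk_fst, smk_fst]
              exact (hcop (j+5) (by omega) (by omega) (j+3) (by omega) (by omega) (by omega)).symm)
          · exact coprime_lift (by
              rw [smk_fst, smk_fst]
              exact (hcop (j+5) (by omega) (by omega) (j+4) (by omega) (by omega) (by omega)).symm)
      obtain ⟨z, hz⟩ := hdvd
      rw [← smk_surj z, pow_two, smk_mul, smk_mul, smk_mul, smk_add, smk_eq_iff] at hz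
      obtain ⟨hzf, hzs⟩ := hz
      have hXn0 : ((a n).num : ℚ) ≠ 0 := by exact_mod_cast (hpos n hn (by omega)).ne'
      -- value of a (n+4)
      have ham : a (n + 4) = (z.fst : ℚ) := by
        rw [hrec n hn, haI (n+3) (by omega) (by omega), haI (n+1) (by omega) (by omega),
          haI (n+2) (by omega) (by omega), haI n hn (by omega), div_eq_iff hXn0]
        have : (a (n+3)).num * (a (n+1)).num + (a (n+2)).num ^ 2 = z.fst * (a n).num := by
          linear_combination hzf
        exact_mod_cast this
      have hbm : b (n + 4) = (z.snd : ℚ) := by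
        rw [hbrec n hn, ham, haI (n+3) (by omega) (by omega), haI (n+1) (by omega) (by omega),
          haI (n+2) (by omega) (by omega), haI n hn (by omega), hbI (n+3) (by omega) (by omega),
          hbI (n+1) (by omega) (by omega), hbI (n+2) (by omega) (by omega),
          hbI n hn (by omega), div_eq_iff hXn0]
        have : (a (n+1)).num * (b (n+3)).num + 2 * (a (n+2)).num * (b (n+2)).num
            + (a (n+3)).num * (b (n+1)).num - z.fst * (b n).num = z.snd * (a n).num := by
          linear_combination hzs
        exact_mod_cast this
      have hXm : (a (n + 4)).num = z.fst := by rw [ham, Rat.num_intCast]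
      have hYm : (b (n + 4)).num = z.snd := by rw [hbm, Rat.num_intCast]
      have hXmpos : 0 < (a (n + 4)).num := by
        rw [hXm]
        nlinarith [hpos n hn (by omega : n ≤ n + 3), hpos (n+1) (by omega) (by omega),
          hpos (n+2) (by omega) (by omega), hpos (n+3) (by omega) (by omega),
          mul_pos (hpos (n+3) (by omega) (by omega : n+3 ≤ n+3)) (hpos (n+1) (by omega) (by omega : n+1 ≤ n+3)),
          sq_nonneg ((a (n+2)).num), hzf]
      have hrel : (a (n+4)).num * (a n).num
          = (a (n+3)).num * (a (n+1)).num + (a (n+2)).num ^ 2 := by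
        rw [hXm]; linear_combination -hzf
      refine ⟨by rw [hXm]; exact ham, by rw [hYm]; exact hbm, hXmpos, ?_⟩
      intro jj hj1 hj2 hj3
      obtain rfl | rfl | rfl : jj = n+1 ∨ jj = n+2 ∨ jj = n+3 := by omega
      · -- jj = n + 1
        have c12 : IsCoprime ((a (n+1)).num) ((a (n+2)).num) :=
          hcop (n+2) (by omega) (by omega) (n+1) (by omega) (by omega) (by omega)
        have h' : IsCoprime ((a (n+1)).num) ((a (n+2)).num ^ 2 + (a (n+1)).num * (a (n+3)).num) :=
          (c12.pow_right).add_mul_left_right _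
        have heq : (a (n+2)).num ^ 2 + (a (n+1)).num * (a (n+3)).num
            = (a (n+4)).num * (a n).num := by linear_combination -hrel
        rw [heq] at h'
        exact h'.of_mul_right_left
      · -- jj = n + 2
        have c12 : IsCoprime ((a (n+1)).num) ((a (n+2)).num) :=
          hcop (n+2) (by omega) (by omega) (n+1) (by omega) (by omega) (by omega)
        have c23 : IsCoprime ((a (n+2)).num) ((a (n+3)).num) :=
          hcop (n+3) (by omega) (by omega) (n+2) (by omega) (by omega) (by omega)
        have h' : IsCoprime ((a (n+2)).num)
            ((a (n+3)).num * (a (n+1)).num + (a (n+2)).num * (a (n+2)).num) :=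
          (c23.mul_right c12.symm).add_mul_left_right _
        have heq : (a (n+3)).num * (a (n+1)).num + (a (n+2)).num * (a (n+2)).num
            = (a (n+4)).num * (a n).num := by linear_combination -hrel
        rw [heq] at h'
        exact h'.of_mul_right_left
      · -- jj = n + 3
        have c23 : IsCoprime ((a (n+2)).num) ((a (n+3)).num) :=
          hcop (n+3) (by omega) (by omega) (n+2) (by omega) (by omega) (by omega)
        have h' : IsCoprime ((a (n+3)).num)
            ((a (n+2)).num ^ 2 + (a (n+3)).num * (a (n+1)).num) :=
          (c23.symm.pow_right).add_mul_left_right _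
        have heq : (a (n+2)).num ^ 2 + (a (n+3)).num * (a (n+1)).num
            = (a (n+4)).num * (a n).num := by linear_combination -hrel
        rw [heq] at h'
        exact h'.of_mul_right_left
  exact fun n hn => ⟨(b n).num, (key n hn).2.1⟩
end

section
/- The first non-linear extension of the Somos-4 sequence is integer: let (a_n)_{n≥1} be the Somos-4 sequence, let w and b_1, b_2, b_3, b_4 be arbitrary integers, and define rational numbers b_n for n ≥ 5 by b_{n+4} = (a_{n+1}·b_{n+3} + 2·a_{n+2}·b_{n+2} + a_{n+3}·b_{n+1} − a_{n+4}·b_n + w·a_{n+2}^2)/a_n. Then b_n is an integer for every n ≥ 1. -/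
open TrivSqZeroExt

/-- Somos-4 integer sequence, 0-indexed: `somosS n` corresponds to `a (n+1)`. -/
def somosS : ℕ → ℤ
  | 0 => 1
  | 1 => 1
  | 2 => 1
  | 3 => 1
  | n + 4 => (somosS (n + 3) * somosS (n + 1) + somosS (n + 2) ^ 2) / somosS n

/-- The ε-component sequence, 0-indexed. -/
def somosT (b1 b2 b3 b4 w : ℤ) : ℕ → ℤ
  | 0 => b1
  | 1 => b2
  | 2 => b3
  | 3 => b4
  | n + 4 =>
      (somosS (n + 1) * somosT b1 b2 b3 b4 w (n + 3)
        + 2 * somosS (n + 2) * somosT b1 b2 b3 b4 w (n + 2)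
        + somosS (n + 3) * somosT b1 b2 b3 b4 w (n + 1)
        - somosS (n + 4) * somosT b1 b2 b3 b4 w n
        + w * somosS (n + 2) ^ 2) / somosS n

example : somosS 4 = 2 := by decide
example : somosS 5 = 3 := by decide
example : somosS 6 = 7 := by decide
example : somosS 7 = 23 := by decide

/-- dual number lift -/
def somosA (b1 b2 b3 b4 w : ℤ) (n : ℕ) : DualNumber ℤ :=
  inl (somosS n) + inr (somosT b1 b2 b3 b4 w n)

def somosB (w : ℤ) : DualNumber ℤ := inl 1 + inr w

lemma fst_somosA (b1 b2 b3 b4 w : ℤ) (n : ℕ) :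
    (somosA b1 b2 b3 b4 w n).fst = somosS n := by simp [somosA]

lemma snd_somosA (b1 b2 b3 b4 w : ℤ) (n : ℕ) :
    (somosA b1 b2 b3 b4 w n).snd = somosT b1 b2 b3 b4 w n := by simp [somosA]

lemma isCoprime_lift (x y : DualNumber ℤ) (h : IsCoprime x.fst y.fst) : IsCoprime x y := by
  obtain ⟨u, v, huv⟩ := h
  have h1 : IsUnit (inl u * x + inl v * y) := by
    rw [isUnit_iff_isUnit_fst]
    simp only [fst_add, fst_mul, fst_inl]
    rw [huv]
    exact isUnit_one
  obtain ⟨zu, hzu⟩ := h1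
  refine ⟨(↑zu⁻¹ : DualNumber ℤ) * inl u, (↑zu⁻¹ : DualNumber ℤ) * inl v, ?_⟩
  rw [mul_assoc, mul_assoc, ← mul_add, ← hzu]
  exact Units.inv_mul zu

lemma malouf_ring {R : Type*} [CommRing R] (a z p q r x1 x2 x3 β : R)
    (E1 : a * z = r * p + q ^ 2 * β)
    (E2 : x1 * p = a * q + r ^ 2 * β)
    (E3 : x2 * q = x1 * r + a ^ 2 * β)
    (E4 : x3 * r = x2 * a + x1 ^ 2 * β) :
    a ∣ p ^ 3 * q ^ 2 * r * (x3 * x1 + x2 ^ 2 * β) :=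
  ⟨r ^ 6 * β ^ 3 * z
    + (β * q ^ 2 * ((x1 * p) ^ 2 + (x1 * p) * (r ^ 2 * β) + (r ^ 2 * β) ^ 2)
        + r ^ 3 * β * p * (x1 * p + r ^ 2 * β)) * q
    + (β * p ^ 3 * r * (x2 * q + x1 * r)) * a * β
    + (x1 * p ^ 3 * q ^ 2) * x2, by
    linear_combination (-(r ^ 6 * β ^ 3)) * E1
      + (β * q ^ 2 * ((x1 * p) ^ 2 + (x1 * p) * (r ^ 2 * β) + (r ^ 2 * β) ^ 2)
          + r ^ 3 * β * p * (x1 * p + r ^ 2 * β)) * E2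
      + (β * p ^ 3 * r * (x2 * q + x1 * r)) * E3
      + (x1 * p ^ 3 * q ^ 2) * E4⟩

section Main

variable (b1 b2 b3 b4 w : ℤ)

/-- the dual-number Somos recurrence relation at index `n` -/
def DRel (n : ℕ) : Prop :=
  somosA b1 b2 b3 b4 w (n + 4) * somosA b1 b2 b3 b4 w n
    = somosA b1 b2 b3 b4 w (n + 3) * somosA b1 b2 b3 b4 w (n + 1)
      + somosA b1 b2 b3 b4 w (n + 2) ^ 2 * somosB w

lemma DRel.fst_eq {n : ℕ} (h : DRel b1 b2 b3 b4 w n) :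
    somosS (n + 4) * somosS n = somosS (n + 3) * somosS (n + 1) + somosS (n + 2) ^ 2 := by
  have := congrArg TrivSqZeroExt.fst h
  simpa [somosA, somosB, pow_two] using this

lemma DRel.snd_eq {n : ℕ} (h : DRel b1 b2 b3 b4 w n) :
    somosS (n + 4) * somosT b1 b2 b3 b4 w n + somosT b1 b2 b3 b4 w (n + 4) * somosS n
      = somosS (n + 3) * somosT b1 b2 b3 b4 w (n + 1)
        + somosS (n + 1) * somosT b1 b2 b3 b4 w (n + 3)
        + 2 * somosS (n + 2) * somosT b1 b2 b3 b4 w (n + 2)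
        + w * somosS (n + 2) ^ 2 := by
  have := congrArg TrivSqZeroExt.snd h
  simp only [somosA, somosB, pow_two, snd_mul, snd_add, snd_inl, snd_inr, fst_add, fst_mul,
    fst_inl, fst_inr, smul_eq_mul, op_smul_eq_smul, add_zero, zero_add, mul_one, mul_zero] at this
  linear_combination this

lemma drel_of_dvd (n : ℕ) (h0 : somosS n ≠ 0)
    (hdvd : somosA b1 b2 b3 b4 w n ∣
      (somosA b1 b2 b3 b4 w (n + 3) * somosA b1 b2 b3 b4 w (n + 1)
        + somosA b1 b2 b3 b4 w (n + 2) ^ 2 * somosB w)) :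
    DRel b1 b2 b3 b4 w n := by
  obtain ⟨Z, hZ⟩ := hdvd
  have hf : somosS (n + 3) * somosS (n + 1) + somosS (n + 2) ^ 2 = somosS n * Z.fst := by
    have := congrArg TrivSqZeroExt.fst hZ
    simpa [somosA, somosB, pow_two] using this
  have hs : somosS (n + 3) * somosT b1 b2 b3 b4 w (n + 1)
      + somosS (n + 1) * somosT b1 b2 b3 b4 w (n + 3)
      + 2 * somosS (n + 2) * somosT b1 b2 b3 b4 w (n + 2)
      + w * somosS (n + 2) ^ 2
      = somosS n * Z.snd + somosT b1 b2 b3 b4 w n * Z.fst := by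
    have := congrArg TrivSqZeroExt.snd hZ
    simp only [somosA, somosB, pow_two, snd_mul, snd_add, snd_inl, snd_inr, fst_add, fst_mul,
      fst_inl, fst_inr, smul_eq_mul, op_smul_eq_smul, add_zero, zero_add, mul_one, mul_zero] at this
    linear_combination this
  have e1 : somosS (n + 4) = Z.fst := by
    show (somosS (n + 3) * somosS (n + 1) + somosS (n + 2) ^ 2) / somosS n = Z.fst
    rw [hf, Int.mul_ediv_cancel_left _ h0]
  have e2 : somosT b1 b2 b3 b4 w (n + 4) = Z.snd := by
    show (somosS (n + 1) * somosT b1 b2 b3 b4 w (n + 3)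
        + 2 * somosS (n + 2) * somosT b1 b2 b3 b4 w (n + 2)
        + somosS (n + 3) * somosT b1 b2 b3 b4 w (n + 1)
        - somosS (n + 4) * somosT b1 b2 b3 b4 w n
        + w * somosS (n + 2) ^ 2) / somosS n = Z.snd
    have : somosS (n + 1) * somosT b1 b2 b3 b4 w (n + 3)
        + 2 * somosS (n + 2) * somosT b1 b2 b3 b4 w (n + 2)
        + somosS (n + 3) * somosT b1 b2 b3 b4 w (n + 1)
        - somosS (n + 4) * somosT b1 b2 b3 b4 w n
        + w * somosS (n + 2) ^ 2 = somosS n * Z.snd := by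
      rw [e1]; linear_combination hs
    rw [this, Int.mul_ediv_cancel_left _ h0]
  have hAZ : somosA b1 b2 b3 b4 w (n + 4) = Z := by
    ext
    · simpa [somosA] using e1
    · simpa [somosA] using e2
  show _ = _
  rw [hAZ, hZ, mul_comm]

/-- The full invariant. -/
def QInv (n : ℕ) : Prop :=
  0 < somosS (n + 4)
    ∧ IsCoprime (somosS (n + 4)) (somosS (n + 3))
    ∧ IsCoprime (somosS (n + 4)) (somosS (n + 2))
    ∧ IsCoprime (somosS (n + 4)) (somosS (n + 1))
    ∧ DRel b1 b2 b3 b4 w n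

lemma drel_base (n : ℕ) (h1 : somosS n = 1) : DRel b1 b2 b3 b4 w n := by
  apply drel_of_dvd
  · rw [h1]; norm_num
  · refine IsUnit.dvd ?_
    rw [isUnit_iff_isUnit_fst, fst_somosA, h1]
    exact isUnit_one

lemma icop (x y : ℤ) (h : Int.gcd x y = 1) : IsCoprime x y :=
  Int.isCoprime_iff_gcd_eq_one.mpr h

set_option maxHeartbeats 1600000 in
lemma qinv_all : ∀ n, QInv b1 b2 b3 b4 w n := by
  intro n
  induction n using Nat.strong_induction_on with
  | _ n ih =>
    match n, ih with
    | 0, _ =>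
      exact ⟨by decide, icop _ _ (by decide), icop _ _ (by decide), icop _ _ (by decide),
        drel_base _ _ _ _ _ 0 (by decide)⟩
    | 1, _ =>
      exact ⟨by decide, icop _ _ (by decide), icop _ _ (by decide), icop _ _ (by decide),
        drel_base _ _ _ _ _ 1 (by decide)⟩
    | 2, _ =>
      exact ⟨by decide, icop _ _ (by decide), icop _ _ (by decide), icop _ _ (by decide),
        drel_base _ _ _ _ _ 2 (by decide)⟩
    | 3, _ =>
      exact ⟨by decide, icop _ _ (by decide), icop _ _ (by decide), icop _ _ (by decide),
        drel_base _ _ _ _ _ 3 (by decide)⟩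
    | (m + 4), ih =>
      obtain ⟨p0, c03, c02, c01, R0⟩ := ih m (by omega)
      obtain ⟨p1, c13, c12, c11, R1⟩ := ih (m + 1) (by omega)
      obtain ⟨p2, c23, c22, c21, R2⟩ := ih (m + 2) (by omega)
      obtain ⟨p3, c33, c32, c31, R3⟩ := ih (m + 3) (by omega)
      -- Malouf divisibility
      have hM := malouf_ring (somosA b1 b2 b3 b4 w (m + 4)) (somosA b1 b2 b3 b4 w m)
        (somosA b1 b2 b3 b4 w (m + 1)) (somosA b1 b2 b3 b4 w (m + 2)) (somosA b1 b2 b3 b4 w (m + 3))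
        (somosA b1 b2 b3 b4 w (m + 5)) (somosA b1 b2 b3 b4 w (m + 6)) (somosA b1 b2 b3 b4 w (m + 7))
        (somosB w) R0 R1 R2 R3
      have hcop : IsCoprime (somosA b1 b2 b3 b4 w (m + 4))
          (somosA b1 b2 b3 b4 w (m + 1) ^ 3 * somosA b1 b2 b3 b4 w (m + 2) ^ 2
            * somosA b1 b2 b3 b4 w (m + 3)) := by
        apply isCoprime_lift
        simp only [fst_mul, fst_pow, fst_somosA]
        exact ((c01.pow_right).mul_right (c02.pow_right)).mul_right c03
      have hdvd : somosA b1 b2 b3 b4 w (m + 4) ∣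
          (somosA b1 b2 b3 b4 w (m + 7) * somosA b1 b2 b3 b4 w (m + 5)
            + somosA b1 b2 b3 b4 w (m + 6) ^ 2 * somosB w) :=
        hcop.dvd_of_dvd_mul_left hM
      have R4 : DRel b1 b2 b3 b4 w (m + 4) := drel_of_dvd b1 b2 b3 b4 w (m + 4) p0.ne' hdvd
      have hfs := R4.fst_eq
      -- positivity
      have p4 : 0 < somosS (m + 4 + 4) := by nlinarith [hfs, p0, p1, p2, p3]
      -- coprimality
      refine ⟨p4, ?_, ?_, ?_, R4⟩
      · -- with somosS (m+7)
        have base : IsCoprime (somosS (m + 6) ^ 2) (somosS (m + 7)) := c33.symm.pow_left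
        have : IsCoprime (somosS (m + 4 + 4) * somosS (m + 4)) (somosS (m + 7)) := by
          rw [hfs]
          exact base.mul_add_left_left (somosS (m + 5))
        exact this.of_mul_left_left
      · -- with somosS (m+6)
        have base : IsCoprime (somosS (m + 7) * somosS (m + 5)) (somosS (m + 6)) :=
          c33.mul_left c23.symm
        have : IsCoprime (somosS (m + 4 + 4) * somosS (m + 4)) (somosS (m + 6)) := by
          rw [hfs, pow_two]
          exact base.add_mul_left_left (somosS (m + 6))
        exact this.of_mul_left_left
      · -- with somosS (m+5)
        have base : IsCoprime (somosS (m + 6) ^ 2) (somosS (m + 5)) := c23.pow_left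
        have : IsCoprime (somosS (m + 4 + 4) * somosS (m + 4)) (somosS (m + 5)) := by
          rw [hfs]
          exact base.mul_add_right_left (somosS (m + 7))
        exact this.of_mul_left_left

end Main

/-- The first non-linear extension of the Somos-4 sequence is integer. -/
theorem somos4_nonlinear_extension_one_integer (a : ℕ → ℚ)
    (h1 : a 1 = 1) (h2 : a 2 = 1) (h3 : a 3 = 1) (h4 : a 4 = 1)
    (hrec : ∀ n, 1 ≤ n →
      a (n + 4) = (a (n + 3) * a (n + 1) + a (n + 2) ^ 2) / a n)
    (w : ℤ) (b : ℕ → ℚ) (b1 b2 b3 b4 : ℤ)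
    (hb1 : b 1 = (b1 : ℚ)) (hb2 : b 2 = (b2 : ℚ)) (hb3 : b 3 = (b3 : ℚ)) (hb4 : b 4 = (b4 : ℚ))
    (hbrec : ∀ n, 1 ≤ n →
      b (n + 4) = (a (n + 1) * b (n + 3) + 2 * a (n + 2) * b (n + 2)
        + a (n + 3) * b (n + 1) - a (n + 4) * b n + (w : ℚ) * a (n + 2) ^ 2) / a n) :
    ∀ n, 1 ≤ n → ∃ k : ℤ, b n = (k : ℚ) := by
  have hQ := qinv_all b1 b2 b3 b4 w
  have hpos : ∀ n : ℕ, 0 < somosS n := by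
    intro n
    match n with
    | 0 | 1 | 2 | 3 => decide
    | (m + 4) => exact (hQ m).1
  have key : ∀ n : ℕ, a (n + 1) = ((somosS n : ℤ) : ℚ) ∧ b (n + 1) = ((somosT b1 b2 b3 b4 w n : ℤ) : ℚ) := by
    intro n
    induction n using Nat.strong_induction_on with
    | _ n ih =>
      match n, ih with
      | 0, _ => exact ⟨by rw [h1]; norm_num [somosS], by rw [hb1]; norm_num [somosT]⟩
      | 1, _ => exact ⟨by rw [h2]; norm_num [somosS], by rw [hb2]; norm_num [somosT]⟩
      | 2, _ => exact ⟨by rw [h3]; norm_num [somosS], by rw [hb3]; norm_num [somosT]⟩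
      | 3, _ => exact ⟨by rw [h4]; norm_num [somosS], by rw [hb4]; norm_num [somosT]⟩
      | (m + 4), ih =>
        obtain ⟨a0, bb0⟩ := ih m (by omega)
        obtain ⟨a1', bb1⟩ := ih (m + 1) (by omega)
        obtain ⟨a2', bb2⟩ := ih (m + 2) (by omega)
        obtain ⟨a3', bb3⟩ := ih (m + 3) (by omega)
        have hs0 : ((somosS m : ℤ) : ℚ) ≠ 0 := by
          exact_mod_cast (hpos m).ne'
        have hfs := (hQ m).2.2.2.2.fst_eq
        have hsnd := (hQ m).2.2.2.2.snd_eq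
        have hA : a (m + 4 + 1) = ((somosS (m + 4) : ℤ) : ℚ) := by
          have hr := hrec (m + 1) (by omega)
          rw [show m + 1 + 4 = m + 4 + 1 from rfl, show m + 1 + 3 = m + 3 + 1 from rfl,
            show m + 1 + 2 = m + 2 + 1 from rfl, a3', a2', a1', a0] at hr
          rw [hr, div_eq_iff hs0]
          exact_mod_cast hfs.symm
        have hB : b (m + 4 + 1) = ((somosT b1 b2 b3 b4 w (m + 4) : ℤ) : ℚ) := by
          have hr := hbrec (m + 1) (by omega)
          rw [show m + 1 + 4 = m + 4 + 1 from rfl, show m + 1 + 3 = m + 3 + 1 from rfl,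
            show m + 1 + 2 = m + 2 + 1 from rfl, a3', a2', a1', a0, bb3, bb2, bb1, bb0, hA] at hr
          rw [hr, div_eq_iff hs0]
          have hz : somosS (m + 1) * somosT b1 b2 b3 b4 w (m + 3)
              + 2 * somosS (m + 2) * somosT b1 b2 b3 b4 w (m + 2)
              + somosS (m + 3) * somosT b1 b2 b3 b4 w (m + 1)
              - somosS (m + 4) * somosT b1 b2 b3 b4 w m
              + w * somosS (m + 2) ^ 2
              = somosT b1 b2 b3 b4 w (m + 4) * somosS m := by linarith [hsnd]
          exact_mod_cast hz
        exact ⟨hA, hB⟩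
  intro n hn
  obtain ⟨m, rfl⟩ : ∃ m, n = m + 1 := ⟨n - 1, by omega⟩
  exact ⟨somosT b1 b2 b3 b4 w m, (key m).2⟩
end

section
/- The second non-linear extension of the Somos-4 sequence is integer: let (a_n)_{n≥1} be the Somos-4 sequence, let w and b_1, b_2, b_3, b_4 be arbitrary integers, and define rational numbers b_n for n ≥ 5 by b_{n+4} = (a_{n+1}·b_{n+3} + 2·a_{n+2}·b_{n+2} + a_{n+3}·b_{n+1} − a_{n+4}·b_n + w·a_{n+3}·a_{n+1})/a_n. Then b_n is an integer for every n ≥ 1. -/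
open Polynomial

/-- Dual numbers over ℤ, realized as ℤ[X]/(X²). -/
abbrev SomosDual : Type := Polynomial ℤ ⧸ Ideal.span {(Polynomial.X : Polynomial ℤ)^2}

/-- The element `p + q ε` of the dual numbers. -/
noncomputable def sd (p q : ℤ) : SomosDual :=
  Ideal.Quotient.mk _ (Polynomial.C p + Polynomial.C q * Polynomial.X)

lemma sd_eq_of (p q r s : ℤ) (h1 : p = r) (h2 : q = s) : sd p q = sd r s := by rw [h1, h2]

lemma sd_inj {p q r s : ℤ} (h : sd p q = sd r s) : p = r ∧ q = s := by
  rw [sd, sd, Ideal.Quotient.eq, Ideal.mem_span_singleton] at h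
  rw [X_pow_dvd_iff] at h
  have h0 := h 0 (by norm_num)
  have h1 := h 1 (by norm_num)
  simp only [coeff_sub, coeff_add, coeff_C, coeff_C_mul, coeff_X] at h0 h1
  norm_num at h0 h1
  exact ⟨by linarith, by linarith⟩

lemma sd_mul (p q r s : ℤ) : sd p q * sd r s = sd (p*r) (p*s + r*q) := by
  rw [sd, sd, sd, ← map_mul, Ideal.Quotient.eq, Ideal.mem_span_singleton]
  refine ⟨C q * C s, ?_⟩
  simp only [C_add, C_mul]
  ring

lemma sd_add (p q r s : ℤ) : sd p q + sd r s = sd (p+r) (q+s) := by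
  rw [sd, sd, sd, ← map_add]
  congr 1
  simp only [C_add, C_mul]
  ring

lemma sd_one : sd 1 0 = 1 := by
  rw [sd]
  simp

lemma sd_surj (z : SomosDual) : ∃ p q : ℤ, z = sd p q := by
  obtain ⟨f, rfl⟩ := Ideal.Quotient.mk_surjective z
  refine ⟨f.coeff 0, f.coeff 1, ?_⟩
  rw [sd, Ideal.Quotient.eq, Ideal.mem_span_singleton, X_pow_dvd_iff]
  intro d hd
  interval_cases d <;>
    · simp only [coeff_sub, coeff_add, coeff_C, coeff_C_mul, coeff_X]
      norm_num

lemma sd_isUnit (p q : ℤ) (hp : IsUnit p) : IsUnit (sd p q) := by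
  rcases Int.isUnit_iff.mp hp with rfl | rfl
  · exact IsUnit.of_mul_eq_one (sd 1 (-q))
      (by rw [sd_mul, ← sd_one]; exact sd_eq_of _ _ _ _ (by ring) (by ring))
  · exact IsUnit.of_mul_eq_one (sd (-1) (-q))
      (by rw [sd_mul, ← sd_one]; exact sd_eq_of _ _ _ _ (by ring) (by ring))

/-- Extraction of components from a divisibility in `SomosDual`. -/
lemma sd_dvd_pair {s t t1 t2 : ℤ} (h : sd s t ∣ sd t1 t2) :
    ∃ p q : ℤ, t1 = s * p ∧ t2 = s * q + p * t := by
  obtain ⟨z, hz⟩ := h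
  obtain ⟨p, q, rfl⟩ := sd_surj z
  rw [sd_mul] at hz
  obtain ⟨e1, e2⟩ := sd_inj hz
  exact ⟨p, q, e1, by linarith⟩

lemma sd_unit_mod (p q s t : ℤ) (h : IsCoprime p s) :
    IsUnit (Ideal.Quotient.mk (Ideal.span {sd s t}) (sd p q)) := by
  obtain ⟨x, y, hxy⟩ := h
  have key : sd x 0 * sd p q + sd y 0 * sd s t = sd 1 (x*q + y*t) := by
    rw [sd_mul, sd_mul, sd_add]
    exact sd_eq_of _ _ _ _ (by linarith) (by ring)
  have h2 : sd 1 (x*q + y*t) * sd 1 (-(x*q + y*t)) = 1 := by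
    rw [sd_mul, ← sd_one]
    exact sd_eq_of _ _ _ _ (by ring) (by ring)
  letI : CommRing (SomosDual ⧸ Ideal.span {sd s t}) := Ideal.Quotient.commRing _
  refine IsUnit.of_mul_eq_one
    ((Ideal.Quotient.mk _) (sd x 0 * sd 1 (-(x*q + y*t)))) ?_
  rw [← map_mul]
  have hrw : sd p q * (sd x 0 * sd 1 (-(x*q + y*t)))
      = sd 1 (x*q + y*t) * sd 1 (-(x*q + y*t)) - sd y 0 * sd s t * sd 1 (-(x*q + y*t)) := by
    rw [← key]; ring
  have h0' : (Ideal.Quotient.mk (Ideal.span {sd s t})) (sd s t) = 0 := by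
    rw [Ideal.Quotient.eq_zero_iff_mem]
    exact Ideal.subset_span rfl
  rw [hrw, h2, map_sub, map_mul, map_mul, h0', mul_zero, zero_mul, sub_zero, map_one]

/-- The key divisibility, in an arbitrary commutative ring. -/
lemma somos_keyDvd {R : Type*} [CommRing R] (c A0 A1 A2 A3 A4 A5 A6 A7 : R)
    (e0 : A4*A0 = c*A3*A1 + A2^2) (e1 : A5*A1 = c*A4*A2 + A3^2)
    (e2 : A6*A2 = c*A5*A3 + A4^2) (e3 : A7*A3 = c*A6*A4 + A5^2)
    (u1 : IsUnit (Ideal.Quotient.mk (Ideal.span {A4}) A1))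
    (u2 : IsUnit (Ideal.Quotient.mk (Ideal.span {A4}) A2))
    (u3 : IsUnit (Ideal.Quotient.mk (Ideal.span {A4}) A3)) :
    A4 ∣ c*A7*A5 + A6^2 := by
  rw [← Ideal.mem_span_singleton, ← Ideal.Quotient.eq_zero_iff_mem]
  set f := Ideal.Quotient.mk (Ideal.span {A4}) with hf
  have h4 : f A4 = 0 := by
    rw [Ideal.Quotient.eq_zero_iff_mem]
    exact Ideal.mem_span_singleton_self A4
  have r0 : f c * f A3 * f A1 + f A2^2 = (0 : R ⧸ Ideal.span {A4}) := by
    have := congrArg f e0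
    simp only [map_mul, map_add, map_pow, h4] at this
    simpa using this.symm
  have r1 : f A5 * f A1 = f A3^2 := by
    have := congrArg f e1
    simp only [map_mul, map_add, map_pow, h4] at this
    simpa using this
  have r2 : f A6 * f A2 = f c * f A5 * f A3 := by
    have := congrArg f e2
    simp only [map_mul, map_add, map_pow, h4] at this
    simpa using this
  have r3 : f A7 * f A3 = f A5^2 := by
    have := congrArg f e3
    simp only [map_mul, map_add, map_pow, h4] at this
    simpa using this
  have big : f A1 * f A2^2 * f A3 * f (c*A7*A5 + A6^2) = 0 := by
    simp only [map_mul, map_add, map_pow]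
    linear_combination (f c*f A5*f A1*f A2^2)*r3 + ((f A6*f A2 + f c*f A5*f A3)*f A1*f A3)*r2
      + (f c*f A5^2*f A2^2)*r1 + (f c*f A5^2*f A3^2)*r0
  have hu : IsUnit (f A1 * f A2^2 * f A3) := ((u1.mul (u2.pow 2)).mul u3)
  obtain ⟨u, hu⟩ := hu
  have := congrArg (fun x => (↑u⁻¹ : R ⧸ Ideal.span {A4}) * x) big
  simp only [← hu, ← mul_assoc] at this
  simpa [Units.inv_mul] using this

lemma sd_rel (w α0 β0 α1 β1 α2 β2 α3 β3 α4 β4 : ℤ)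
    (e1 : α4*α0 = α3*α1 + α2^2)
    (e2 : α4*β0 + α0*β4 = w*α3*α1 + α3*β1 + α1*β3 + 2*α2*β2) :
    sd α4 β4 * sd α0 β0 = sd 1 w * sd α3 β3 * sd α1 β1 + (sd α2 β2)^2 := by
  have hsq : (sd α2 β2)^2 = sd (α2*α2) (α2*β2 + α2*β2) := by rw [sq, sd_mul]
  rw [hsq, sd_mul, sd_mul, sd_mul, sd_add]
  exact sd_eq_of _ _ _ _ (by linear_combination e1) (by linear_combination e2)

lemma sd_T (w p3 q3 p1 q1 p2 q2 : ℤ) :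
    sd 1 w * sd p3 q3 * sd p1 q1 + (sd p2 q2)^2
      = sd (p3*p1 + p2^2) (w*p3*p1 + p3*q1 + p1*q3 + 2*p2*q2) := by
  have hsq : (sd p2 q2)^2 = sd (p2*p2) (p2*q2 + p2*q2) := by rw [sq, sd_mul]
  rw [hsq, sd_mul, sd_mul, sd_add]
  exact sd_eq_of _ _ _ _ (by ring) (by ring)

/-- Integrality and positivity data at one index. -/
def SomosOK (a b : ℕ → ℚ) (k : ℕ) : Prop :=
  a k = ((a k).num : ℚ) ∧ 0 < (a k).num ∧ b k = ((b k).num : ℚ)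

/-- The full induction hypothesis: a window of four integral values with
pairwise coprime numerators. -/
def SomosWin (a b : ℕ → ℚ) (n : ℕ) : Prop :=
  SomosOK a b n ∧ SomosOK a b (n+1) ∧ SomosOK a b (n+2) ∧ SomosOK a b (n+3) ∧
  IsCoprime (a n).num (a (n+1)).num ∧ IsCoprime (a n).num (a (n+2)).num ∧
  IsCoprime (a n).num (a (n+3)).num ∧ IsCoprime (a (n+1)).num (a (n+2)).num ∧
  IsCoprime (a (n+1)).num (a (n+3)).num ∧ IsCoprime (a (n+2)).num (a (n+3)).num

lemma somos_getRel (a b : ℕ → ℚ) (w : ℤ) (k : ℕ)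
    (hr : a (k+4) = (a (k+3) * a (k+1) + a (k+2)^2) / a k)
    (hbr : b (k+4) = (a (k+1) * b (k+3) + 2 * a (k+2) * b (k+2)
        + a (k+3) * b (k+1) - a (k+4) * b k + (w:ℚ) * a (k+3) * a (k+1)) / a k)
    (h0 : SomosOK a b k) (h1 : SomosOK a b (k+1)) (h2 : SomosOK a b (k+2))
    (h3 : SomosOK a b (k+3)) (h4 : SomosOK a b (k+4)) :
    sd (a (k+4)).num (b (k+4)).num * sd (a k).num (b k).num
      = sd 1 w * sd (a (k+3)).num (b (k+3)).num * sd (a (k+1)).num (b (k+1)).num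
        + (sd (a (k+2)).num (b (k+2)).num)^2 := by
  have hne : a k ≠ 0 := by
    have : (0:ℚ) < a k := by rw [h0.1]; exact_mod_cast h0.2.1
    exact ne_of_gt this
  have hq1 : a (k+4) * a k = a (k+3) * a (k+1) + a (k+2)^2 := by
    rw [hr]; field_simp
  have hq2 : b (k+4) * a k = a (k+1) * b (k+3) + 2 * a (k+2) * b (k+2)
      + a (k+3) * b (k+1) - a (k+4) * b k + (w:ℚ) * a (k+3) * a (k+1) := by
    rw [hbr]; field_simp
  rw [h0.1, h1.1, h2.1, h3.1, h4.1] at hq1 hq2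
  rw [h0.2.2, h1.2.2, h2.2.2, h3.2.2, h4.2.2] at hq2
  have e1 : (a (k+4)).num * (a k).num = (a (k+3)).num * (a (k+1)).num + (a (k+2)).num^2 := by
    exact_mod_cast hq1
  have e2 : (a (k+4)).num * (b k).num + (a k).num * (b (k+4)).num
      = w * (a (k+3)).num * (a (k+1)).num + (a (k+3)).num * (b (k+1)).num
        + (a (k+1)).num * (b (k+3)).num + 2 * (a (k+2)).num * (b (k+2)).num := by
    have : (((a (k+4)).num * (b k).num + (a k).num * (b (k+4)).num : ℤ) : ℚ)
        = ((w * (a (k+3)).num * (a (k+1)).num + (a (k+3)).num * (b (k+1)).num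
        + (a (k+1)).num * (b (k+3)).num + 2 * (a (k+2)).num * (b (k+2)).num : ℤ) : ℚ) := by
      push_cast
      linarith [hq2]
    exact_mod_cast this
  exact sd_rel w _ _ _ _ _ _ _ _ _ _ e1 e2

lemma somos_key (w : ℤ) (A B : ℕ → ℤ) (j : ℕ)
    (rel : ∀ i, i ≤ 3 →
      sd (A (j+i+4)) (B (j+i+4)) * sd (A (j+i)) (B (j+i))
        = sd 1 w * sd (A (j+i+3)) (B (j+i+3)) * sd (A (j+i+1)) (B (j+i+1))
          + (sd (A (j+i+2)) (B (j+i+2)))^2)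
    (c1 : IsCoprime (A (j+1)) (A (j+4))) (c2 : IsCoprime (A (j+2)) (A (j+4)))
    (c3 : IsCoprime (A (j+3)) (A (j+4))) :
    sd (A (j+4)) (B (j+4)) ∣
      sd 1 w * sd (A (j+7)) (B (j+7)) * sd (A (j+5)) (B (j+5)) + (sd (A (j+6)) (B (j+6)))^2 := by
  have r0 := rel 0 (by norm_num)
  have r1 := rel 1 (by norm_num)
  have r2 := rel 2 (by norm_num)
  have r3 := rel 3 (by norm_num)
  have e0 : sd (A (j+4)) (B (j+4)) * sd (A j) (B j)
      = sd 1 w * sd (A (j+3)) (B (j+3)) * sd (A (j+1)) (B (j+1)) + (sd (A (j+2)) (B (j+2)))^2 := by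
    convert r0 using 3 <;> simp
  have e1 : sd (A (j+5)) (B (j+5)) * sd (A (j+1)) (B (j+1))
      = sd 1 w * sd (A (j+4)) (B (j+4)) * sd (A (j+2)) (B (j+2)) + (sd (A (j+3)) (B (j+3)))^2 := by
    convert r1 using 3
  have e2 : sd (A (j+6)) (B (j+6)) * sd (A (j+2)) (B (j+2))
      = sd 1 w * sd (A (j+5)) (B (j+5)) * sd (A (j+3)) (B (j+3)) + (sd (A (j+4)) (B (j+4)))^2 := by
    convert r2 using 3
  have e3 : sd (A (j+7)) (B (j+7)) * sd (A (j+3)) (B (j+3))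
      = sd 1 w * sd (A (j+6)) (B (j+6)) * sd (A (j+4)) (B (j+4)) + (sd (A (j+5)) (B (j+5)))^2 := by
    convert r3 using 3
  exact somos_keyDvd (sd 1 w) _ _ _ _ _ _ _ _ e0 e1 e2 e3
    (sd_unit_mod _ _ _ _ c1) (sd_unit_mod _ _ _ _ c2) (sd_unit_mod _ _ _ _ c3)

/-- The second non-linear extension of the Somos-4 sequence is integer. -/
theorem somos4_nonlinear_extension_two_integer (a : ℕ → ℚ)
    (h1 : a 1 = 1) (h2 : a 2 = 1) (h3 : a 3 = 1) (h4 : a 4 = 1)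
    (hrec : ∀ n, 1 ≤ n →
      a (n + 4) = (a (n + 3) * a (n + 1) + a (n + 2) ^ 2) / a n)
    (w : ℤ) (b : ℕ → ℚ) (b1 b2 b3 b4 : ℤ)
    (hb1 : b 1 = (b1 : ℚ)) (hb2 : b 2 = (b2 : ℚ)) (hb3 : b 3 = (b3 : ℚ)) (hb4 : b 4 = (b4 : ℚ))
    (hbrec : ∀ n, 1 ≤ n →
      b (n + 4) = (a (n + 1) * b (n + 3) + 2 * a (n + 2) * b (n + 2)
        + a (n + 3) * b (n + 1) - a (n + 4) * b n + (w : ℚ) * a (n + 3) * a (n + 1)) / a n) :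
    ∀ n, 1 ≤ n → ∃ k : ℤ, b n = (k : ℚ) := by
  -- base integrality facts
  have ok1 : SomosOK a b 1 := by
    refine ⟨by rw [h1]; norm_num, by rw [h1]; norm_num, by rw [hb1, Rat.num_intCast]⟩
  have ok2 : SomosOK a b 2 := by
    refine ⟨by rw [h2]; norm_num, by rw [h2]; norm_num, by rw [hb2, Rat.num_intCast]⟩
  have ok3 : SomosOK a b 3 := by
    refine ⟨by rw [h3]; norm_num, by rw [h3]; norm_num, by rw [hb3, Rat.num_intCast]⟩
  have ok4 : SomosOK a b 4 := by
    refine ⟨by rw [h4]; norm_num, by rw [h4]; norm_num, by rw [hb4, Rat.num_intCast]⟩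
  have num1 : (a 1).num = 1 := by rw [h1]; norm_num
  have num2 : (a 2).num = 1 := by rw [h2]; norm_num
  have num3 : (a 3).num = 1 := by rw [h3]; norm_num
  have num4 : (a 4).num = 1 := by rw [h4]; norm_num
  have main : ∀ n, 1 ≤ n → SomosWin a b n := by
    intro n
    induction n using Nat.strong_induction_on with
    | _ n ih =>
      intro hn
      rcases eq_or_lt_of_le hn with hone | htwo
      · -- base case n = 1
        subst hone
        refine ⟨ok1, ok2, ok3, ok4, ?_, ?_, ?_, ?_, ?_, ?_⟩
        · rw [num1]; exact isCoprime_one_left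
        · rw [num1]; exact isCoprime_one_left
        · rw [num1]; exact isCoprime_one_left
        · show IsCoprime (a 2).num (a 3).num
          rw [num2]; exact isCoprime_one_left
        · show IsCoprime (a 2).num (a 4).num
          rw [num2]; exact isCoprime_one_left
        · show IsCoprime (a 3).num (a 4).num
          rw [num3]; exact isCoprime_one_left
      · -- step : n = m + 1 with m ≥ 1
        obtain ⟨m, rfl⟩ : ∃ m, n = m + 1 := ⟨n - 1, by omega⟩
        have hm : 1 ≤ m := by omega
        obtain ⟨okm0, okm1, okm2, okm3, c01, c02, c03, c12, c13, c23⟩ :=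
          ih m (by omega) hm
        have hAm_pos : 0 < (a m).num := okm0.2.1
        have hAmne : a m ≠ 0 := by
          have : (0:ℚ) < a m := by rw [okm0.1]; exact_mod_cast hAm_pos
          exact ne_of_gt this
        -- the crucial divisibility
        have hdvd : sd (a m).num (b m).num ∣
            sd 1 w * sd (a (m+3)).num (b (m+3)).num * sd (a (m+1)).num (b (m+1)).num
              + (sd (a (m+2)).num (b (m+2)).num)^2 := by
          by_cases hm4 : m ≤ 4
          · -- a m = 1, so sd (a m).num (b m).num is a unit
            have hnum : (a m).num = 1 := by
              interval_cases m
              · exact num1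
              · exact num2
              · exact num3
              · exact num4
            exact (sd_isUnit _ _ (by rw [hnum]; exact isUnit_one)).dvd
          · -- m ≥ 5 : use the key lemma
            obtain ⟨j, rfl⟩ : ∃ j, m = j + 4 := ⟨m - 4, by omega⟩
            have hj : 1 ≤ j := by omega
            obtain ⟨okj0, okj1, okj2, okj3, _, _, _, _, _, _⟩ := ih j (by omega) hj
            have W1 := ih (j+1) (by omega) (by omega)
            have ok : ∀ i : ℕ, i ≤ 7 → SomosOK a b (j + i) := by
              intro i hi
              interval_cases i
              · exact okj0
              · exact okj1
              · exact okj2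
              · exact okj3
              · exact okm0
              · exact okm1
              · exact okm2
              · exact okm3
            refine somos_key w (fun k => (a k).num) (fun k => (b k).num) j ?_
              W1.2.2.2.2.2.2.1 W1.2.2.2.2.2.2.2.2.1 W1.2.2.2.2.2.2.2.2.2
            intro i hi
            refine somos_getRel a b w (j+i) (hrec (j+i) (by omega)) (hbrec (j+i) (by omega))
              (ok i (by omega)) ?_ ?_ ?_ ?_
            · exact ok (i+1) (by omega)
            · exact ok (i+2) (by omega)
            · exact ok (i+3) (by omega)
            · exact ok (i+4) (by omega)
        -- extract the integer components of a (m+4), b (m+4)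
        rw [sd_T] at hdvd
        obtain ⟨p, q, hp1, hp2⟩ := sd_dvd_pair hdvd
        have hAmne' : ((a m).num : ℚ) ≠ 0 := by exact_mod_cast ne_of_gt hAm_pos
        have ha4 : a (m+4) = (p:ℚ) := by
          rw [hrec m hm, okm0.1, okm1.1, okm2.1, okm3.1, div_eq_iff hAmne']
          exact_mod_cast (show (a (m+3)).num * (a (m+1)).num + (a (m+2)).num^2
            = p * (a m).num by linarith)
        have hb4' : b (m+4) = (q:ℚ) := by
          rw [hbrec m hm, ha4, okm0.1, okm1.1, okm2.1, okm3.1,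
            okm0.2.2, okm1.2.2, okm2.2.2, okm3.2.2, div_eq_iff hAmne']
          push_cast
          have : ((a (m+1)).num * (b (m+3)).num + 2 * (a (m+2)).num * (b (m+2)).num
              + (a (m+3)).num * (b (m+1)).num - p * (b m).num + w * (a (m+3)).num * (a (m+1)).num
              : ℤ) = q * (a m).num := by linarith
          exact_mod_cast congrArg (fun z : ℤ => (z : ℚ)) this
        have hnum4 : (a (m+4)).num = p := by rw [ha4, Rat.num_intCast]
        have hppos : 0 < p := by
          have hl : 0 < (a m).num * p := by
            rw [← hp1]
            have := mul_pos okm3.2.1 okm1.2.1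
            nlinarith [sq_nonneg (a (m+2)).num]
          rcases mul_pos_iff.mp hl with ⟨_, h⟩ | ⟨h, _⟩
          · exact h
          · omega
        have okm4 : SomosOK a b (m+4) := by
          refine ⟨by rw [ha4, Rat.num_intCast], by rw [hnum4]; exact hppos,
            by rw [hb4', Rat.num_intCast]⟩
        -- new coprimality facts
        have cNew1 : IsCoprime (a (m+1)).num (a (m+4)).num := by
          rw [hnum4]
          have base : IsCoprime (a (m+1)).num ((a (m+2)).num^2 + (a (m+3)).num * (a (m+1)).num) :=
            (c12.pow_right).add_mul_right_right _
          have heq : (a (m+2)).num^2 + (a (m+3)).num * (a (m+1)).num = (a m).num * p := by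
            linarith
          rw [heq] at base
          exact base.of_mul_right_right
        have cNew2 : IsCoprime (a (m+2)).num (a (m+4)).num := by
          rw [hnum4]
          have base : IsCoprime (a (m+2)).num
              ((a (m+3)).num * (a (m+1)).num + (a (m+2)).num * (a (m+2)).num) :=
            (c23.mul_right c12.symm).add_mul_left_right _
          have heq : (a (m+3)).num * (a (m+1)).num + (a (m+2)).num * (a (m+2)).num
              = (a m).num * p := by nlinarith [hp1]
          rw [heq] at base
          exact base.of_mul_right_right
        have cNew3 : IsCoprime (a (m+3)).num (a (m+4)).num := by
          rw [hnum4]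
          have base : IsCoprime (a (m+3)).num
              ((a (m+2)).num^2 + (a (m+1)).num * (a (m+3)).num) :=
            (c23.symm.pow_right).add_mul_right_right _
          have heq : (a (m+2)).num^2 + (a (m+1)).num * (a (m+3)).num = (a m).num * p := by
            linarith
          rw [heq] at base
          exact base.of_mul_right_right
        exact ⟨okm1, okm2, okm3, okm4, c12, c13, cNew1, c23, cNew2, cNew3⟩
  intro n hn
  exact ⟨(b n).num, (main n hn).1.2.2⟩
end

section
/- The odd-indexed and even-indexed Lucas numbers give dual-number solutions of the two Cassini-type recurrences satisfied by the odd-indexed and even-indexed Fibonacci numbers. Precisely, working in the dual numbers over ℤ (with ε^2 = 0), set A_n = F_{2n+1} + L_{2n+1}·ε and Ã_n = F_{2n} + L_{2n}·ε for n ≥ 0, where F_k is the k-th Fibonacci number and L_k = F_{k-1} + F_{k+1} is the k-th Lucas number. Then for all n ≥ 0: A_{n+2}·A_n = A_{n+1}^2 + 1 and Ã_{n+2}·Ã_n = Ã_{n+1}^2 − 1. Equivalently, in addition to the Cassini identities F_{2n+5}F_{2n+1} = F_{2n+3}^2 + 1 and F_{2n+4}F_{2n} = F_{2n+2}^2 −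 1, one has L_{2n+5}F_{2n+1} + L_{2n+1}F_{2n+5} = 2·L_{2n+3}F_{2n+3} and L_{2n+4}F_{2n} + L_{2n}F_{2n+4} = 2·L_{2n+2}F_{2n+2}. -/
open DualNumber in
theorem dual_cassini_plus (a b c d e f : ℤ) (h1 : a*c = e^2+1) (h2 : a*d + b*c = 2*(e*f)) :
    ((a:DualNumber ℤ) + (b:DualNumber ℤ)*eps)*((c:DualNumber ℤ)+(d:DualNumber ℤ)*eps)
      = ((e:DualNumber ℤ)+(f:DualNumber ℤ)*eps)^2 + 1 := by
  refine TrivSqZeroExt.ext ?_ ?_ <;> simp [pow_two] <;> linarith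

open DualNumber in
theorem dual_cassini_minus (a b c d e f : ℤ) (h1 : a*c = e^2-1) (h2 : a*d + b*c = 2*(e*f)) :
    ((a:DualNumber ℤ) + (b:DualNumber ℤ)*eps)*((c:DualNumber ℤ)+(d:DualNumber ℤ)*eps)
      = ((e:DualNumber ℤ)+(f:DualNumber ℤ)*eps)^2 - 1 := by
  refine TrivSqZeroExt.ext ?_ ?_ <;> simp [pow_two] <;> linarith

theorem fib_cassini_aux : ∀ n : ℕ, (Nat.fib (2*n+1):ℤ)^2
    - Nat.fib (2*n) * Nat.fib (2*n+1) - (Nat.fib (2*n))^2 = 1 := by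
  intro n
  induction n with
  | zero => simp
  | succ k ih =>
    have h1 : 2*(k+1) = 2*k+2 := by ring
    rw [h1]
    have h2 : (2*k+2)+1 = (2*k+1)+2 := by ring
    rw [h2, Nat.fib_add_two, Nat.fib_add_two]
    push_cast
    nlinarith [ih]

/-- Odd- and even-indexed Lucas numbers give dual-number solutions of the
two Cassini-type recurrences satisfied by the odd- and even-indexed
Fibonacci numbers. -/
theorem lucas_dual_fibonacci_cassini (L : ℕ → ℤ)
    (hL0 : L 0 = 2)
    (hL : ∀ k, 1 ≤ k → L k = (Nat.fib (k - 1) : ℤ) + (Nat.fib (k + 1) : ℤ))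
    (A Atilde : ℕ → DualNumber ℤ)
    (hA : ∀ n, A n = (Nat.fib (2 * n + 1) : DualNumber ℤ)
      + (L (2 * n + 1) : DualNumber ℤ) * DualNumber.eps)
    (hAtilde : ∀ n, Atilde n = (Nat.fib (2 * n) : DualNumber ℤ)
      + (L (2 * n) : DualNumber ℤ) * DualNumber.eps) :
    ∀ n : ℕ, A (n + 2) * A n = A (n + 1) ^ 2 + 1
      ∧ Atilde (n + 2) * Atilde n = Atilde (n + 1) ^ 2 - 1 := by
  intro n
  obtain ⟨a, hfa⟩ : ∃ x : ℤ, (Nat.fib (2*n) : ℤ) = x := ⟨_, rfl⟩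
  obtain ⟨b, hfb⟩ : ∃ x : ℤ, (Nat.fib (2*n+1) : ℤ) = x := ⟨_, rfl⟩
  have f2 : (Nat.fib (2*n+2) : ℤ) = a + b := by
    rw [Nat.fib_add_two]; push_cast [hfa, hfb]; ring
  have f3 : (Nat.fib (2*n+3) : ℤ) = a + 2*b := by
    have h : 2*n+3 = (2*n+1)+2 := by ring
    rw [h, Nat.fib_add_two]; push_cast [hfb, f2]; ring
  have f4 : (Nat.fib (2*n+4) : ℤ) = 2*a + 3*b := by
    have h : 2*n+4 = (2*n+2)+2 := by ring
    rw [h, Nat.fib_add_two]; push_cast [f2, f3]; ring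
  have f5 : (Nat.fib (2*n+5) : ℤ) = 3*a + 5*b := by
    have h : 2*n+5 = (2*n+3)+2 := by ring
    rw [h, Nat.fib_add_two]; push_cast [f3, f4]; ring
  have f6 : (Nat.fib (2*n+6) : ℤ) = 5*a + 8*b := by
    have h : 2*n+6 = (2*n+4)+2 := by ring
    rw [h, Nat.fib_add_two]; push_cast [f4, f5]; ring
  have l0 : L (2*n) = 2*b - a := by
    cases n with
    | zero =>
      simp at hfa hfb
      rw [Nat.mul_zero, hL0, ← hfa, ← hfb]; ring
    | succ m =>
      have h1 : 2*(m+1) = 2*m+2 := by ring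
      rw [h1, hL (2*m+2) (by omega)]
      have h2 : 2*m+2-1 = 2*m+1 := by omega
      have h3 : 2*m+2+1 = 2*m+3 := by ring
      rw [h1] at hfa
      rw [show 2*(m+1)+1 = 2*m+3 from by ring] at hfb
      have hf : (Nat.fib (2*m+3) : ℤ) = Nat.fib (2*m+1) + Nat.fib (2*m+2) := by
        have h : 2*m+3 = (2*m+1)+2 := by ring
        rw [show (2*m+1)+2 = 2*m+3 from by ring] at h
        have h' : Nat.fib (2*m+3) = Nat.fib (2*m+1) + Nat.fib (2*m+2) := by
          rw [show 2*m+3 = (2*m+1)+2 from by ring, Nat.fib_add_two]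
        rw [h']; push_cast; ring
      rw [h2, h3]
      rw [hfb] at hf
      linarith [hf, hfa]
  have l1 : L (2*n+1) = 2*a + b := by
    rw [hL (2*n+1) (by omega)]
    rw [show 2*n+1-1 = 2*n from by omega, show 2*n+1+1 = 2*n+2 from by ring, hfa, f2]; ring
  have l2 : L (2*n+2) = a + 3*b := by
    rw [hL (2*n+2) (by omega)]
    rw [show 2*n+2-1 = 2*n+1 from by omega, show 2*n+2+1 = 2*n+3 from by ring, hfb, f3]; ring
  have l3 : L (2*n+3) = 3*a + 4*b := by
    rw [hL (2*n+3) (by omega)]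
    rw [show 2*n+3-1 = 2*n+2 from by omega, show 2*n+3+1 = 2*n+4 from by ring, f2, f4]; ring
  have l4 : L (2*n+4) = 4*a + 7*b := by
    rw [hL (2*n+4) (by omega)]
    rw [show 2*n+4-1 = 2*n+3 from by omega, show 2*n+4+1 = 2*n+5 from by ring, f3, f5]; ring
  have l5 : L (2*n+5) = 7*a + 11*b := by
    rw [hL (2*n+5) (by omega)]
    rw [show 2*n+5-1 = 2*n+4 from by omega, show 2*n+5+1 = 2*n+6 from by ring, f4, f6]; ring
  have key : b^2 - a*b - a^2 = 1 := by
    have := fib_cassini_aux n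
    rw [hfa, hfb] at this
    exact this
  have castfib : ∀ m : ℕ, ((Nat.fib m : DualNumber ℤ)) = (((Nat.fib m : ℤ)) : DualNumber ℤ) := by
    intro m; push_cast; rfl
  constructor
  · rw [hA (n+2), hA (n+1), hA n,
      show 2*(n+2)+1 = 2*n+5 from by ring, show 2*(n+1)+1 = 2*n+3 from by ring,
      castfib, castfib, castfib, f5, f3, hfb, l5, l1, l3]
    exact dual_cassini_plus _ _ _ _ _ _ (by nlinarith [key]) (by ring)
  · rw [hAtilde (n+2), hAtilde (n+1), hAtilde n,
      show 2*(n+2) = 2*n+4 from by ring, show 2*(n+1) = 2*n+2 from by ring,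
      castfib, castfib, castfib, f4, f2, hfa, l4, l2, l0]
    exact dual_cassini_minus _ _ _ _ _ _ (by nlinarith [key]) (by ring)
end

section
/- The linearization of the Cassini recurrence for even-indexed Fibonacci numbers, with initial conditions of the form (3p, q), produces integer sequences: let ã_n = F_{2n} for n ≥ 1 (so ã_1 = 1, ã_2 = 3, and ã_{n+2}·ã_n = ã_{n+1}^2 − 1), let p, q be arbitrary integers, set b̃_1 = 3p, b̃_2 = q, and define rational numbers b̃_n for n ≥ 3 by b̃_{n+2} = (2·b̃_{n+1}·ã_{n+1} − b̃_n·ã_{n+2})/ã_n. Then b̃_n is an integer for every n ≥ 1. -/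
lemma fib2_rec (m : ℕ) : (Nat.fib (2*m+4) : ℤ) = 3 * Nat.fib (2*m+2) - Nat.fib (2*m) := by
  have h1 : Nat.fib (2*m+2) = Nat.fib (2*m) + Nat.fib (2*m+1) := Nat.fib_add_two
  have h2 : Nat.fib (2*m+3) = Nat.fib (2*m+1) + Nat.fib (2*m+2) := by
    rw [show 2*m+3 = (2*m+1)+2 by ring]; exact Nat.fib_add_two
  have h3 : Nat.fib (2*m+4) = Nat.fib (2*m+2) + Nat.fib (2*m+3) := by
    rw [show 2*m+4 = (2*m+2)+2 by ring]; exact Nat.fib_add_two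
  push_cast [h3, h2, h1]; ring

/-- The linearization of the Cassini recurrence for even-indexed Fibonacci
numbers, with initial conditions of the form (3p, q), produces integer
sequences. -/
theorem even_fibonacci_cassini_linearization_integer (atilde : ℕ → ℚ)
    (ha : ∀ n, 1 ≤ n → atilde n = (Nat.fib (2 * n) : ℚ))
    (p q : ℤ) (btilde : ℕ → ℚ)
    (hb1 : btilde 1 = 3 * (p : ℚ)) (hb2 : btilde 2 = (q : ℚ))
    (hbrec : ∀ n, 1 ≤ n →
      btilde (n + 2) = (2 * btilde (n + 1) * atilde (n + 1)
        - btilde n * atilde (n + 2)) / atilde n) :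
    ∀ n, 1 ≤ n → ∃ k : ℤ, btilde n = (k : ℚ) := by
  have key : ∀ n, 1 ≤ n → ∃ k1 k2 t s : ℤ,
      btilde n = (k1 : ℚ) ∧ btilde (n+1) = (k2 : ℚ) ∧
      2*k2 - 3*k1 = (Nat.fib (2*n) : ℤ) * t ∧
      2*k1 - 3*k2 = (Nat.fib (2*n+2) : ℤ) * s := by
    intro n hn
    induction n, hn using Nat.le_induction with
    | base =>
      refine ⟨3*p, q, 2*q - 9*p, 2*p - q, by push_cast [hb1]; ring, hb2, ?_, ?_⟩
      · have f2 : Nat.fib (2*1) = 1 := rfl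
        rw [f2]; push_cast; ring
      · have f4 : Nat.fib (2*1+2) = 3 := rfl
        rw [f4]; push_cast; ring
    | succ n hn ih =>
      obtain ⟨k1, k2, t, s, h1, h2, h3, h4⟩ := ih
      set A : ℤ := (Nat.fib (2*n) : ℤ) with hA
      set A' : ℤ := (Nat.fib (2*n+2) : ℤ) with hA'
      set A'' : ℤ := (Nat.fib (2*n+4) : ℤ) with hA''
      have hf : A'' = 3 * A' - A := fib2_rec n
      refine ⟨k2, A' * t + k1, 2*t + s, -t, h2, ?_, ?_, ?_⟩
      · -- btilde (n+2) = A' * t + k1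
        have hrec := hbrec n hn
        rw [ha n hn, ha (n+1) (by omega), ha (n+2) (by omega), h1, h2] at hrec
        have e1 : 2*(n+1) = 2*n+2 := by ring
        have e2 : 2*(n+2) = 2*n+4 := by ring
        rw [e1, e2] at hrec
        have hfpos : 0 < Nat.fib (2*n) := Nat.fib_pos.mpr (by omega)
        have hAQ : ((Nat.fib (2*n) : ℚ)) ≠ 0 := by exact_mod_cast hfpos.ne'
        have hnum : 2*k2*A' - k1*A'' = A * (A' * t + k1) := by
          linear_combination A' * h3 - k1 * hf
        rw [hrec, div_eq_iff hAQ]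
        have hq := congrArg (fun z : ℤ => (z : ℚ)) hnum
        push_cast [hA, hA', hA''] at hq ⊢
        linear_combination hq
      · -- 2*(A'*t+k1) - 3*k2 = fib(2(n+1)) * (2t+s)
        have e1 : 2*(n+1) = 2*n+2 := by ring
        rw [e1]
        linear_combination h4
      · have e1 : 2*(n+1)+2 = 2*n+4 := by ring
        rw [e1]
        linear_combination h3 + t * hf
  intro n hn
  obtain ⟨k1, _, _, _, h1, _⟩ := key n hn
  exact ⟨k1, h1⟩
end

section
/- The sequence A005246 satisfies a linear recurrence: if (a_n)_{n≥1} is the sequence of rational numbers defined by a_1 = a_2 = a_3 = 1 and a_{n+3} = (a_{n+2}·a_{n+1} + 1)/a_n for n ≥ 1, then a_n is a positive integer for every n and a_{n+4} = 4·a_{n+2} − a_n for all n ≥ 1. -/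
private def dz (n : ℕ) : ℤ := if n % 2 = 1 then 2 else 3

private def dd (n : ℕ) : ℚ := if n % 2 = 1 then 2 else 3

private lemma dd_cast (n : ℕ) : ((dz n : ℤ) : ℚ) = dd n := by
  unfold dz dd; split <;> norm_num

private lemma dd_ge (n : ℕ) : 2 ≤ dd n := by
  unfold dd; split <;> norm_num

private lemma dd_mul (n : ℕ) : dd n * dd (n + 1) = 6 := by
  unfold dd
  rcases Nat.mod_two_eq_zero_or_one n with h | h <;>
    simp [h, Nat.add_mod] <;> norm_num

private lemma dd_add_two (n : ℕ) : dd (n + 2) = dd n := by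
  unfold dd; simp [Nat.add_mod]

private lemma A005246_key (a : ℕ → ℚ)
    (h1 : a 1 = 1) (h2 : a 2 = 1) (h3 : a 3 = 1)
    (hrec : ∀ n, 1 ≤ n → a (n + 3) = (a (n + 2) * a (n + 1) + 1) / a n) :
    ∀ n : ℕ, 1 ≤ a (n + 1) ∧ a (n + 1) ≤ a (n + 2) ∧ (∃ j : ℤ, a (n + 1) = j)
      ∧ (∃ l : ℤ, a (n + 2) = l)
      ∧ a (n + 3) + a (n + 1) = dd (n + 1) * a (n + 2)
      ∧ dd (n + 1) * a (n + 2) ^ 2 + 1 = dd (n + 2) * (a (n + 3) * a (n + 1)) := by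
  intro n
  induction n with
  | zero =>
    refine ⟨by rw [h1], by rw [h1, h2], ⟨1, by rw [h1]; norm_num⟩,
      ⟨1, by rw [h2]; norm_num⟩, ?_, ?_⟩ <;>
      · show _
        rw [h1, h2, h3]
        unfold dd
        norm_num
  | succ k ih =>
    obtain ⟨hk1, hk2, ⟨j, hj⟩, ⟨l, hl⟩, e, s⟩ := ih
    have hak : a (k + 1) ≠ 0 := by linarith
    have hd2 : 2 ≤ dd (k + 1) := dd_ge _
    have h2' : 1 ≤ a (k + 2) := le_trans hk1 hk2
    have hrk : a (k + 4) * a (k + 1) = a (k + 3) * a (k + 2) + 1 := by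
      have h := hrec (k + 1) (by omega)
      have hidx : k + 1 + 3 = k + 4 := by omega
      have hidx2 : k + 1 + 2 = k + 3 := by omega
      have hidx3 : k + 1 + 1 = k + 2 := by omega
      rw [hidx, hidx2, hidx3] at h
      rw [h]
      field_simp
    -- a (k+3) = dd(k+1) * a(k+2) - a(k+1)
    refine ⟨h2', ?_, ⟨l, hl⟩, ?_, ?_, ?_⟩
    · -- a (k+2) ≤ a (k+3)
      show a (k + 2) ≤ a (k + 3)
      nlinarith [dd_ge (k + 1)]
    · -- a (k+3) is an integer
      refine ⟨dz (k + 1) * l - j, ?_⟩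
      show a (k + 3) = _
      have hval : a (k + 3) = dd (k + 1) * a (k + 2) - a (k + 1) := by linarith
      rw [hval, hj, hl, ← dd_cast]
      push_cast
      ring
    · -- invariant e at k+1
      show a (k + 4) + a (k + 2) = dd (k + 2) * a (k + 3)
      have key : (a (k + 4) + a (k + 2)) * a (k + 1)
          = (dd (k + 2) * a (k + 3)) * a (k + 1) := by
        linear_combination hrk + a (k + 2) * e + s
      exact mul_right_cancel₀ hak key
    · -- invariant s at k+1
      show dd (k + 2) * a (k + 3) ^ 2 + 1 = dd (k + 3) * (a (k + 4) * a (k + 2))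
      rw [show dd (k + 3) = dd (k + 1) from dd_add_two (k + 1)]
      have key : (dd (k + 2) * a (k + 3) ^ 2 + 1) * a (k + 1)
          = (dd (k + 1) * (a (k + 4) * a (k + 2))) * a (k + 1) := by
        linear_combination (-(a (k + 3))) * s - dd (k + 1) * a (k + 2) * hrk + e
      exact mul_right_cancel₀ hak key

/-- The sequence A005246 consists of positive integers and satisfies the
linear recurrence a_{n+4} = 4 a_{n+2} - a_n. -/
theorem A005246_linear_recurrence (a : ℕ → ℚ)
    (h1 : a 1 = 1) (h2 : a 2 = 1) (h3 : a 3 = 1)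
    (hrec : ∀ n, 1 ≤ n → a (n + 3) = (a (n + 2) * a (n + 1) + 1) / a n) :
    (∀ n, 1 ≤ n → ∃ k : ℤ, 0 < k ∧ a n = (k : ℚ))
    ∧ (∀ n, 1 ≤ n → a (n + 4) = 4 * a (n + 2) - a n) := by
  have key := A005246_key a h1 h2 h3 hrec
  constructor
  · intro n hn
    obtain ⟨m, rfl⟩ : ∃ m, n = m + 1 := ⟨n - 1, by omega⟩
    obtain ⟨hk1, _, ⟨j, hj⟩, _⟩ := key m
    refine ⟨j, ?_, hj⟩
    have : (1 : ℚ) ≤ (j : ℚ) := by rw [← hj]; exact hk1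
    exact_mod_cast lt_of_lt_of_le zero_lt_one this
  · intro n hn
    obtain ⟨m, rfl⟩ : ∃ m, n = m + 1 := ⟨n - 1, by omega⟩
    obtain ⟨_, _, _, _, e1, _⟩ := key m
    obtain ⟨_, _, _, _, e2, _⟩ := key (m + 1)
    obtain ⟨_, _, _, _, e3, _⟩ := key (m + 2)
    simp only [show m+1+1 = m+2 by omega, show m+1+2 = m+3 by omega,
      show m+1+3 = m+4 by omega, show m+2+1 = m+3 by omega,
      show m+2+2 = m+4 by omega, show m+2+3 = m+5 by omega] at e1 e2 e3
    rw [dd_add_two] at e3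
    have hm := dd_mul (m + 1)
    show a (m + 1 + 4) = 4 * a (m + 1 + 2) - a (m + 1)
    simp only [show m+1+4 = m+5 by omega, show m+1+2 = m+3 by omega]
    linear_combination e3 + dd (m + 1) * e2 + e1 + a (m + 3) * hm
end

section
/- The non-linear extension of the sequence A005246 is integer: let (a_n)_{n≥1} be defined by a_1 = a_2 = a_3 = 1 and a_{n+3} = (a_{n+2}·a_{n+1} + 1)/a_n (every a_n is a positive integer), let w and b_1, b_2, b_3 be arbitrary integers, and define rational numbers b_n for n ≥ 4 by b_{n+3} = (b_{n+2}·a_{n+1} + b_{n+1}·a_{n+2} − b_n·a_{n+3} + w)/a_n. Then b_n is an integer for every n ≥ 1. -/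
/-- Alternating coefficient 2,3 for the linear recurrence. -/
def cc (n : ℕ) : ℤ := if n % 2 = 1 then 2 else 3

lemma cc_step (n : ℕ) : cc (n + 2) = cc n := by
  have h : (n + 2) % 2 = n % 2 := by omega
  simp [cc, h]

lemma cc_ge_two (n : ℕ) : 2 ≤ cc n := by
  unfold cc; split <;> norm_num

/-- Integer version of A005246 (shifted so index 1 is the first term). -/
def A : ℕ → ℤ
  | 0 => 1
  | 1 => 1
  | 2 => 1
  | n + 3 => cc (n + 1) * A (n + 2) - A (n + 1)

lemma A_rec (n : ℕ) : A (n + 3) = cc (n + 1) * A (n + 2) - A (n + 1) := rfl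

lemma A_bounds : ∀ n, 1 ≤ A (n + 1) ∧ A (n + 1) ≤ A (n + 2) := by
  intro n
  induction n with
  | zero => exact ⟨le_refl 1, le_refl 1⟩
  | succ m ih =>
    have hc := cc_ge_two (m + 1)
    rw [A_rec m]
    constructor <;> nlinarith [ih.1, ih.2]

lemma A_identity : ∀ n, A (n + 4) * A (n + 1) = A (n + 3) * A (n + 2) + 1 := by
  intro n
  induction n with
  | zero => rfl
  | succ m ih =>
    have hA : A (m + 3) = cc (m + 1) * A (m + 2) - A (m + 1) := rfl
    have h5 : A (m + 5) = cc (m + 1) * A (m + 4) - A (m + 3) := by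
      rw [A_rec (m + 2), cc_step]
    rw [h5]
    linear_combination ih - A (m + 4) * hA

/-- ε-part of the alternating coefficient. -/
def ss (b1 b2 b3 w : ℤ) (n : ℕ) : ℤ :=
  if n % 2 = 1 then b1 + b3 - 2 * b2 else 2 * b2 - 2 * b3 + w - 2 * b1

lemma ss_step (b1 b2 b3 w : ℤ) (n : ℕ) : ss b1 b2 b3 w (n + 2) = ss b1 b2 b3 w n := by
  have h : (n + 2) % 2 = n % 2 := by omega
  simp [ss, h]

/-- Integer version of the ε-component sequence. -/
def Bb (b1 b2 b3 w : ℤ) : ℕ → ℤ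
  | 0 => 0
  | 1 => b1
  | 2 => b2
  | n + 3 => cc (n + 1) * Bb b1 b2 b3 w (n + 2) - Bb b1 b2 b3 w (n + 1)
      + ss b1 b2 b3 w (n + 1) * A (n + 2)

lemma Bb_rec (b1 b2 b3 w : ℤ) (n : ℕ) :
    Bb b1 b2 b3 w (n + 3) = cc (n + 1) * Bb b1 b2 b3 w (n + 2) - Bb b1 b2 b3 w (n + 1)
      + ss b1 b2 b3 w (n + 1) * A (n + 2) := rfl

lemma Bb_three (b1 b2 b3 w : ℤ) : Bb b1 b2 b3 w 3 = b3 := by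
  rw [Bb_rec]
  show cc 1 * b2 - b1 + ss b1 b2 b3 w 1 * 1 = b3
  simp [cc, ss]

lemma B_identity (b1 b2 b3 w : ℤ) : ∀ n,
    Bb b1 b2 b3 w (n + 4) * A (n + 1)
      = Bb b1 b2 b3 w (n + 3) * A (n + 2) + Bb b1 b2 b3 w (n + 2) * A (n + 3)
        - Bb b1 b2 b3 w (n + 1) * A (n + 4) + w := by
  intro n
  induction n with
  | zero =>
    have hB4 : Bb b1 b2 b3 w 4
        = cc 2 * Bb b1 b2 b3 w 3 - Bb b1 b2 b3 w 2 + ss b1 b2 b3 w 2 * A 3 := rfl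
    rw [hB4, Bb_three, show A 1 = 1 from rfl, show A 2 = 1 from rfl,
      show A 3 = 1 from rfl, show A 4 = 2 from rfl,
      show Bb b1 b2 b3 w 2 = b2 from rfl, show Bb b1 b2 b3 w 1 = b1 from rfl]
    norm_num [cc, ss]
    ring
  | succ m ih =>
    have hA : A (m + 3) = cc (m + 1) * A (m + 2) - A (m + 1) := rfl
    have hB : Bb b1 b2 b3 w (m + 3) = cc (m + 1) * Bb b1 b2 b3 w (m + 2)
        - Bb b1 b2 b3 w (m + 1) + ss b1 b2 b3 w (m + 1) * A (m + 2) := rfl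
    have hA5 : A (m + 5) = cc (m + 1) * A (m + 4) - A (m + 3) := by
      rw [A_rec (m + 2), cc_step]
    have hB5 : Bb b1 b2 b3 w (m + 5) = cc (m + 1) * Bb b1 b2 b3 w (m + 4)
        - Bb b1 b2 b3 w (m + 3) + ss b1 b2 b3 w (m + 1) * A (m + 4) := by
      rw [Bb_rec _ _ _ _ (m + 2), cc_step, ss_step]
    rw [hA5, hB5]
    linear_combination ih - Bb b1 b2 b3 w (m + 4) * hA - A (m + 4) * hB

/-- The non-linear extension of the sequence A005246 is integer. -/
theorem A005246_nonlinear_extension_integer (a : ℕ → ℚ)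
    (h1 : a 1 = 1) (h2 : a 2 = 1) (h3 : a 3 = 1)
    (hrec : ∀ n, 1 ≤ n → a (n + 3) = (a (n + 2) * a (n + 1) + 1) / a n)
    (w : ℤ) (b : ℕ → ℚ) (b1 b2 b3 : ℤ)
    (hb1 : b 1 = (b1 : ℚ)) (hb2 : b 2 = (b2 : ℚ)) (hb3 : b 3 = (b3 : ℚ))
    (hbrec : ∀ n, 1 ≤ n →
      b (n + 3) = (b (n + 2) * a (n + 1) + b (n + 1) * a (n + 2)
        - b n * a (n + 3) + (w : ℚ)) / a n) :
    ∀ n, 1 ≤ n → ∃ k : ℤ, b n = (k : ℚ) := by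
  set B := Bb b1 b2 b3 w with hBdef
  have key : ∀ n, (a (n + 1) = (A (n + 1) : ℚ) ∧ b (n + 1) = (B (n + 1) : ℚ))
      ∧ (a (n + 2) = (A (n + 2) : ℚ) ∧ b (n + 2) = (B (n + 2) : ℚ))
      ∧ (a (n + 3) = (A (n + 3) : ℚ) ∧ b (n + 3) = (B (n + 3) : ℚ)) := by
    intro n
    induction n with
    | zero =>
      refine ⟨⟨?_, ?_⟩, ⟨?_, ?_⟩, ⟨?_, ?_⟩⟩
      · rw [h1]; norm_num [A]
      · rw [hb1]; norm_num [hBdef, Bb]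
      · rw [h2]; norm_num [A]
      · rw [hb2]; norm_num [hBdef, Bb]
      · rw [h3]; show (1 : ℚ) = ((cc 1 * A 2 - A 1 : ℤ) : ℚ); norm_num [cc, A]
      · rw [hb3, hBdef, Bb_three]
    | succ m ih =>
      obtain ⟨⟨ha1, hb1'⟩, ⟨ha2, hb2'⟩, ⟨ha3, hb3'⟩⟩ := ih
      have hApos : (0 : ℚ) < (A (m + 1) : ℚ) := by
        exact_mod_cast lt_of_lt_of_le one_pos (A_bounds m).1
      have hAne : (A (m + 1) : ℚ) ≠ 0 := ne_of_gt hApos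
      have ha4 : a (m + 4) = (A (m + 4) : ℚ) := by
        have h : a (m + 4) = (a (m + 3) * a (m + 2) + 1) / a (m + 1) :=
          hrec (m + 1) (Nat.le_add_left 1 m)
        rw [ha1, ha2, ha3] at h
        rw [h, div_eq_iff hAne]
        exact_mod_cast (A_identity m).symm
      have hb4 : b (m + 4) = (B (m + 4) : ℚ) := by
        have h : b (m + 4) = (b (m + 3) * a (m + 2) + b (m + 2) * a (m + 3)
            - b (m + 1) * a (m + 4) + (w : ℚ)) / a (m + 1) :=
          hbrec (m + 1) (Nat.le_add_left 1 m)
        rw [ha1, ha2, ha3, ha4, hb1', hb2', hb3'] at h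
        rw [h, div_eq_iff hAne]
        exact_mod_cast (B_identity b1 b2 b3 w m).symm
      exact ⟨⟨ha2, hb2'⟩, ⟨ha3, hb3'⟩, ⟨ha4, hb4⟩⟩
  intro n hn
  obtain ⟨m, rfl⟩ : ∃ m, n = m + 1 := ⟨n - 1, by omega⟩
  exact ⟨B (m + 1), (key m).1.2⟩
end

section
/- The period-6 alternating-sign non-linear extension of the sequence A005246 is integer: let (a_n)_{n≥1} be defined by a_1 = a_2 = a_3 = 1 and a_{n+3} = (a_{n+2}·a_{n+1} + 1)/a_n (every a_n is a positive integer), let b_1, b_2, b_3 be arbitrary integers, and define rational numbers b_n for n ≥ 4 by b_{n+3} = (b_{n+2}·a_{n+1} + b_{n+1}·a_{n+2} − b_n·a_{n+3} + s_n·a_{n+2}·a_{n+1})/a_n, where s_n = +1 if n mod 6 ∈ {1, 2, 3} and s_n = −1 if n mod 6 ∈ {4, 5, 0}. Then b_n is an integer for every n ≥ 1. -/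
def A005246aux_A : ℕ → ℤ := fun r =>
  if r = 1 then 7 else if r = 2 then 1 else if r = 3 then -3
  else if r = 4 then -7 else if r = 5 then -1 else 3

def A005246aux_B : ℕ → ℤ := fun r =>
  if r = 1 then -2 else if r = 2 then 3 else if r = 3 then 2
  else if r = 4 then 3 else if r = 5 then -2 else -3

/-- The period-6 alternating-sign non-linear extension of the sequence
A005246 is integer: the sign `s n` is +1 for n ≡ 1, 2, 3 (mod 6) and −1
for n ≡ 4, 5, 0 (mod 6). -/
theorem A005246_alternating_extension_integer (a : ℕ → ℚ)
    (h1 : a 1 = 1) (h2 : a 2 = 1) (h3 : a 3 = 1)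
    (hrec : ∀ n, 1 ≤ n → a (n + 3) = (a (n + 2) * a (n + 1) + 1) / a n)
    (b : ℕ → ℚ) (b1 b2 b3 : ℤ)
    (hb1 : b 1 = (b1 : ℚ)) (hb2 : b 2 = (b2 : ℚ)) (hb3 : b 3 = (b3 : ℚ))
    (s : ℕ → ℚ)
    (hs : ∀ n, s n = if n % 6 = 1 ∨ n % 6 = 2 ∨ n % 6 = 3 then 1 else -1)
    (hbrec : ∀ n, 1 ≤ n →
      b (n + 3) = (b (n + 2) * a (n + 1) + b (n + 1) * a (n + 2)
        - b n * a (n + 3) + s n * a (n + 2) * a (n + 1)) / a n) :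
    ∀ n, 1 ≤ n → ∃ k : ℤ, b n = (k : ℚ) := by
  -- positivity of a
  have hpos3 : ∀ n : ℕ, 0 < a (n+1) ∧ 0 < a (n+2) ∧ 0 < a (n+3) := by
    intro n
    induction n with
    | zero =>
      refine ⟨?_, ?_, ?_⟩ <;> simp only [h1, h2, h3] <;> norm_num
    | succ m ih =>
      obtain ⟨p1, p2, p3⟩ := ih
      refine ⟨p2, p3, ?_⟩
      have : a (m+1+3) = (a (m+1+2) * a (m+1+1) + 1) / a (m+1) := hrec (m+1) (by omega)
      rw [show m+1+3 = m+4 from by omega, show m+1+2 = m+3 from by omega,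
        show m+1+1 = m+2 from by omega] at this
      rw [this]
      exact div_pos (by nlinarith) p1
  have apos : ∀ n, 1 ≤ n → 0 < a n := by
    intro n hn
    obtain ⟨m, rfl⟩ : ∃ m, n = m + 1 := ⟨n-1, by omega⟩
    exact (hpos3 m).1
  have hne : ∀ n, 1 ≤ n → a n ≠ 0 := fun n hn => (apos n hn).ne'
  -- quadratic identity
  have hq : ∀ n, 1 ≤ n → a (n+3) * a n = a (n+2) * a (n+1) + 1 := by
    intro n hn
    rw [hrec n hn]
    exact div_mul_cancel₀ _ (hne n hn)
  -- k-relations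
  have hk2' : ∀ n : ℕ,
      (a (n+3) + a (n+1) = (if (n+1) % 2 = 1 then (2:ℚ) else 3) * a (n+2)) ∧
      (a (n+4) + a (n+2) = (if (n+2) % 2 = 1 then (2:ℚ) else 3) * a (n+3)) := by
    intro n
    induction n with
    | zero =>
      have ha4 : a 4 = 2 := by
        have := hrec 1 (by norm_num)
        norm_num [h1, h2, h3] at this
        exact this
      constructor
      · norm_num [h1, h2, h3]
      · norm_num [h2, h3, ha4]
    | succ m ih =>
      obtain ⟨e1, e2⟩ := ih
      have e2' : a (m+1+3) + a (m+1+1) = (if (m+1+1) % 2 = 1 then (2:ℚ) else 3) * a (m+1+2) := by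
        rw [show m+1+3 = m+4 from by omega, show m+1+1 = m+2 from by omega,
          show m+1+2 = m+3 from by omega]
        exact e2
      refine ⟨e2', ?_⟩
      have hq1 := hq (m+1) (by omega)
      have hq2 := hq (m+2) (by omega)
      rw [show m+1+3 = m+4 from by omega, show m+1+2 = m+3 from by omega,
        show m+1+1 = m+2 from by omega] at hq1
      rw [show m+2+3 = m+5 from by omega, show m+2+2 = m+4 from by omega,
        show m+2+1 = m+3 from by omega] at hq2
      have hc : (a (m+5) + a (m+3)) * a (m+2)
          = ((if (m+1) % 2 = 1 then (2:ℚ) else 3) * a (m+4)) * a (m+2) := by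
        have hc0 : (a (m+5) + a (m+3)) * a (m+2) = (a (m+3) + a (m+1)) * a (m+4) := by
          linear_combination hq2 - hq1
        rw [hc0, e1]
        ring
      have := mul_right_cancel₀ (hne (m+2) (by omega)) hc
      rw [show m+1+4 = m+5 from by omega, show m+1+2 = m+3 from by omega,
        show m+1+3 = m+4 from by omega, show (m+1+2) % 2 = (m+1) % 2 from by omega]
      exact this
  have hkrel : ∀ n, 1 ≤ n → a (n+2) + a n = (if n % 2 = 1 then (2:ℚ) else 3) * a (n+1) := by
    intro n hn
    obtain ⟨m, rfl⟩ : ∃ m, n = m + 1 := ⟨n-1, by omega⟩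
    exact (hk2' m).1
  -- linear recurrence
  have hlin : ∀ n, 1 ≤ n → a (n+4) = 4 * a (n+2) - a n := by
    intro n hn
    have e3 := hkrel n hn
    have e2 := hkrel (n+1) (by omega)
    have e1 := hkrel (n+2) (by omega)
    rw [show n+2+2 = n+4 from by omega, show n+2+1 = n+3 from by omega,
      show (n+2) % 2 = n % 2 from by omega] at e1
    rw [show n+1+2 = n+3 from by omega, show n+1+1 = n+2 from by omega] at e2
    rcases Nat.even_or_odd n with h | h
    · rw [Nat.even_iff] at h
      rw [if_neg (by omega)] at e1 e3
      rw [if_pos (by omega)] at e2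
      linear_combination e1 + 3 * e2 + e3
    · rw [Nat.odd_iff] at h
      rw [if_pos (by omega)] at e1 e3
      rw [if_neg (by omega)] at e2
      linear_combination e1 + 2 * e2 + e3
  -- multiplied b-recurrence
  have hbq : ∀ n, 1 ≤ n → a n * b (n+3) = b (n+2) * a (n+1) + b (n+1) * a (n+2)
      - b n * a (n+3) + s n * a (n+2) * a (n+1) := by
    intro n hn
    rw [hbrec n hn, mul_div_cancel₀ _ (hne n hn)]
  -- small values
  have ha4 : a 4 = 2 := by
    have := hrec 1 (by norm_num)
    norm_num [h1, h2, h3] at this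
    exact this
  have ha5 : a 5 = 3 := by
    have := hrec 2 (by norm_num)
    norm_num [h2, h3, ha4] at this
    exact this
  have hs1 : s 1 = 1 := by rw [hs]; norm_num
  have hs2 : s 2 = 1 := by rw [hs]; norm_num
  have hb4 : b 4 = b 3 + b 2 - 2 * b 1 + 1 := by
    have h := hbq 1 (by norm_num)
    norm_num [h1, h2, h3, ha4, hs1] at h
    linear_combination h
  have hb5 : b 5 = b 4 + 2 * b 3 - 3 * b 2 + 2 := by
    have h := hbq 2 (by norm_num)
    norm_num [h2, h3, ha4, ha5, hs2] at h
    linear_combination h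
  -- the key invariant
  have inv : ∀ n, 1 ≤ n → b (n+4) - 4 * b (n+2) + b n
      = ((-(b1 + 2*b2 + b3) + A005246aux_A (n % 6) : ℤ) : ℚ) * a (n+2)
        + ((A005246aux_B (n % 6) : ℤ) : ℚ) * a (n+3) := by
    intro n hn
    induction n, hn using Nat.le_induction with
    | base =>
      norm_num [A005246aux_A, A005246aux_B, h3, ha4, hb5, hb4, hb1, hb2, hb3]
      ring
    | succ n hn ih =>
      simp only [show n+1+4 = n+5 from by omega, show n+1+2 = n+3 from by omega,
        show n+1+3 = n+4 from by omega]
      have hbq0 := hbq n hn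
      have hbq2 := hbq (n+2) (by omega)
      rw [show n+2+3 = n+5 from by omega, show n+2+2 = n+4 from by omega,
        show n+2+1 = n+3 from by omega] at hbq2
      have hl0 := hlin n hn
      have hl1 := hlin (n+1) (by omega)
      rw [show n+1+4 = n+5 from by omega, show n+1+2 = n+3 from by omega] at hl1
      have hkk1 := hkrel (n+1) (by omega)
      rw [show n+1+2 = n+3 from by omega, show n+1+1 = n+2 from by omega] at hkk1
      have hkk2 := hkrel (n+2) (by omega)
      rw [show n+2+2 = n+4 from by omega, show n+2+1 = n+3 from by omega] at hkk2
      have h6 : n % 6 = 0 ∨ n % 6 = 1 ∨ n % 6 = 2 ∨ n % 6 = 3 ∨ n % 6 = 4 ∨ n % 6 = 5 := by omega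
      rcases h6 with hr | hr | hr | hr | hr | hr
      · -- n % 6 = 0
        have hr1 : (n+1) % 6 = 1 := by omega
        have hsn : s n = -1 := by rw [hs]; rw [if_neg (by omega)]
        have hsn2 : s (n+2) = 1 := by rw [hs]; rw [if_pos (by omega)]
        rw [if_pos (by omega)] at hkk1
        rw [if_neg (by omega)] at hkk2
        rw [hsn] at hbq0
        rw [hsn2] at hbq2
        have tA : A005246aux_A (0 : ℕ) = 3 := by norm_num [A005246aux_A]
        have tB : A005246aux_B (0 : ℕ) = -3 := by norm_num [A005246aux_B]
        have tA1 : A005246aux_A (1 : ℕ) = 7 := by norm_num [A005246aux_A]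
        have tB1 : A005246aux_B (1 : ℕ) = -2 := by norm_num [A005246aux_B]
        rw [hr, tA, tB] at ih
        push_cast at ih
        rw [hr1, tA1, tB1]
        push_cast
        refine mul_left_cancel₀ (hne (n+2) (by omega)) ?_
        linear_combination hbq2 + a (n+3) * ih - hbq0 + b (n+3) * hl0 - b (n+2) * hl1
          - (-1 : ℚ) * a (n+2) * hkk1 + ((1 : ℚ) * a (n+3) - (-2 : ℚ) * a (n+2)) * hkk2
      · -- n % 6 = 1
        have hr1 : (n+1) % 6 = 2 := by omega
        have hsn : s n = 1 := by rw [hs]; rw [if_pos (by omega)]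
        have hsn2 : s (n+2) = 1 := by rw [hs]; rw [if_pos (by omega)]
        rw [if_neg (by omega)] at hkk1
        rw [if_pos (by omega)] at hkk2
        rw [hsn] at hbq0
        rw [hsn2] at hbq2
        have tA : A005246aux_A (1 : ℕ) = 7 := by norm_num [A005246aux_A]
        have tB : A005246aux_B (1 : ℕ) = -2 := by norm_num [A005246aux_B]
        have tA1 : A005246aux_A (2 : ℕ) = 1 := by norm_num [A005246aux_A]
        have tB1 : A005246aux_B (2 : ℕ) = 3 := by norm_num [A005246aux_B]
        rw [hr, tA, tB] at ih
        push_cast at ih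
        rw [hr1, tA1, tB1]
        push_cast
        refine mul_left_cancel₀ (hne (n+2) (by omega)) ?_
        linear_combination hbq2 + a (n+3) * ih - hbq0 + b (n+3) * hl0 - b (n+2) * hl1
          - (1 : ℚ) * a (n+2) * hkk1 + ((1 : ℚ) * a (n+3) - (3 : ℚ) * a (n+2)) * hkk2
      · -- n % 6 = 2
        have hr1 : (n+1) % 6 = 3 := by omega
        have hsn : s n = 1 := by rw [hs]; rw [if_pos (by omega)]
        have hsn2 : s (n+2) = -1 := by rw [hs]; rw [if_neg (by omega)]
        rw [if_pos (by omega)] at hkk1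
        rw [if_neg (by omega)] at hkk2
        rw [hsn] at hbq0
        rw [hsn2] at hbq2
        have tA : A005246aux_A (2 : ℕ) = 1 := by norm_num [A005246aux_A]
        have tB : A005246aux_B (2 : ℕ) = 3 := by norm_num [A005246aux_B]
        have tA1 : A005246aux_A (3 : ℕ) = -3 := by norm_num [A005246aux_A]
        have tB1 : A005246aux_B (3 : ℕ) = 2 := by norm_num [A005246aux_B]
        rw [hr, tA, tB] at ih
        push_cast at ih
        rw [hr1, tA1, tB1]
        push_cast
        refine mul_left_cancel₀ (hne (n+2) (by omega)) ?_
        linear_combination hbq2 + a (n+3) * ih - hbq0 + b (n+3) * hl0 - b (n+2) * hl1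
          - (1 : ℚ) * a (n+2) * hkk1 + ((-1 : ℚ) * a (n+3) - (2 : ℚ) * a (n+2)) * hkk2
      · -- n % 6 = 3
        have hr1 : (n+1) % 6 = 4 := by omega
        have hsn : s n = 1 := by rw [hs]; rw [if_pos (by omega)]
        have hsn2 : s (n+2) = -1 := by rw [hs]; rw [if_neg (by omega)]
        rw [if_neg (by omega)] at hkk1
        rw [if_pos (by omega)] at hkk2
        rw [hsn] at hbq0
        rw [hsn2] at hbq2
        have tA : A005246aux_A (3 : ℕ) = -3 := by norm_num [A005246aux_A]
        have tB : A005246aux_B (3 : ℕ) = 2 := by norm_num [A005246aux_B]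
        have tA1 : A005246aux_A (4 : ℕ) = -7 := by norm_num [A005246aux_A]
        have tB1 : A005246aux_B (4 : ℕ) = 3 := by norm_num [A005246aux_B]
        rw [hr, tA, tB] at ih
        push_cast at ih
        rw [hr1, tA1, tB1]
        push_cast
        refine mul_left_cancel₀ (hne (n+2) (by omega)) ?_
        linear_combination hbq2 + a (n+3) * ih - hbq0 + b (n+3) * hl0 - b (n+2) * hl1
          - (1 : ℚ) * a (n+2) * hkk1 + ((-1 : ℚ) * a (n+3) - (3 : ℚ) * a (n+2)) * hkk2
      · -- n % 6 = 4
        have hr1 : (n+1) % 6 = 5 := by omega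
        have hsn : s n = -1 := by rw [hs]; rw [if_neg (by omega)]
        have hsn2 : s (n+2) = -1 := by rw [hs]; rw [if_neg (by omega)]
        rw [if_pos (by omega)] at hkk1
        rw [if_neg (by omega)] at hkk2
        rw [hsn] at hbq0
        rw [hsn2] at hbq2
        have tA : A005246aux_A (4 : ℕ) = -7 := by norm_num [A005246aux_A]
        have tB : A005246aux_B (4 : ℕ) = 3 := by norm_num [A005246aux_B]
        have tA1 : A005246aux_A (5 : ℕ) = -1 := by norm_num [A005246aux_A]
        have tB1 : A005246aux_B (5 : ℕ) = -2 := by norm_num [A005246aux_B]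
        rw [hr, tA, tB] at ih
        push_cast at ih
        rw [hr1, tA1, tB1]
        push_cast
        refine mul_left_cancel₀ (hne (n+2) (by omega)) ?_
        linear_combination hbq2 + a (n+3) * ih - hbq0 + b (n+3) * hl0 - b (n+2) * hl1
          - (-1 : ℚ) * a (n+2) * hkk1 + ((-1 : ℚ) * a (n+3) - (-2 : ℚ) * a (n+2)) * hkk2
      · -- n % 6 = 5
        have hr1 : (n+1) % 6 = 0 := by omega
        have hsn : s n = -1 := by rw [hs]; rw [if_neg (by omega)]
        have hsn2 : s (n+2) = 1 := by rw [hs]; rw [if_pos (by omega)]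
        rw [if_neg (by omega)] at hkk1
        rw [if_pos (by omega)] at hkk2
        rw [hsn] at hbq0
        rw [hsn2] at hbq2
        have tA : A005246aux_A (5 : ℕ) = -1 := by norm_num [A005246aux_A]
        have tB : A005246aux_B (5 : ℕ) = -2 := by norm_num [A005246aux_B]
        have tA1 : A005246aux_A (0 : ℕ) = 3 := by norm_num [A005246aux_A]
        have tB1 : A005246aux_B (0 : ℕ) = -3 := by norm_num [A005246aux_B]
        rw [hr, tA, tB] at ih
        push_cast at ih
        rw [hr1, tA1, tB1]
        push_cast
        refine mul_left_cancel₀ (hne (n+2) (by omega)) ?_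
        linear_combination hbq2 + a (n+3) * ih - hbq0 + b (n+3) * hl0 - b (n+2) * hl1
          - (-1 : ℚ) * a (n+2) * hkk1 + ((1 : ℚ) * a (n+3) - (-3 : ℚ) * a (n+2)) * hkk2
  -- integer values of a
  have aint4 : ∀ n : ℕ, (∃ k : ℤ, a (n+1) = k) ∧ (∃ k : ℤ, a (n+2) = k)
      ∧ (∃ k : ℤ, a (n+3) = k) ∧ (∃ k : ℤ, a (n+4) = k) := by
    intro n
    induction n with
    | zero =>
      exact ⟨⟨1, by rw [h1]; norm_num⟩, ⟨1, by rw [h2]; norm_num⟩,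
        ⟨1, by rw [h3]; norm_num⟩, ⟨2, by rw [ha4]; norm_num⟩⟩
    | succ m ih =>
      obtain ⟨⟨k1, e1⟩, i2, ⟨k3, e3⟩, i4⟩ := ih
      refine ⟨i2, ⟨k3, e3⟩, i4, ⟨4 * k3 - k1, ?_⟩⟩
      have hl := hlin (m+1) (by omega)
      rw [show m+1+4 = m+5 from by omega, show m+1+2 = m+3 from by omega] at hl
      rw [show m+1+4 = m+5 from by omega, hl, e3, e1]
      push_cast
      ring
  have aint : ∀ n, 1 ≤ n → ∃ k : ℤ, a n = (k : ℚ) := by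
    intro n hn
    obtain ⟨m, rfl⟩ : ∃ m, n = m + 1 := ⟨n-1, by omega⟩
    exact (aint4 m).1
  -- integer values of b
  have bint4 : ∀ n : ℕ, (∃ k : ℤ, b (n+1) = k) ∧ (∃ k : ℤ, b (n+2) = k)
      ∧ (∃ k : ℤ, b (n+3) = k) ∧ (∃ k : ℤ, b (n+4) = k) := by
    intro n
    induction n with
    | zero =>
      exact ⟨⟨b1, hb1⟩, ⟨b2, hb2⟩, ⟨b3, hb3⟩,
        ⟨b3 + b2 - 2*b1 + 1, by rw [hb4, hb1, hb2, hb3]; push_cast; ring⟩⟩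
    | succ m ih =>
      obtain ⟨⟨k1, e1⟩, i2, ⟨k3, e3⟩, i4⟩ := ih
      obtain ⟨j3, f3⟩ := aint (m+3) (by omega)
      obtain ⟨j4, f4⟩ := aint (m+4) (by omega)
      refine ⟨i2, ⟨k3, e3⟩, i4,
        ⟨4 * k3 - k1 + (-(b1 + 2*b2 + b3) + A005246aux_A ((m+1) % 6)) * j3
          + A005246aux_B ((m+1) % 6) * j4, ?_⟩⟩
      have hi := inv (m+1) (by omega)
      rw [show m+1+4 = m+5 from by omega, show m+1+2 = m+3 from by omega,
        show m+1+3 = m+4 from by omega] at hi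
      rw [show m+1+4 = m+5 from by omega]
      have : b (m+5) = 4 * b (m+3) - b (m+1)
          + ((-(b1 + 2*b2 + b3) + A005246aux_A ((m+1) % 6) : ℤ) : ℚ) * a (m+3)
          + ((A005246aux_B ((m+1) % 6) : ℤ) : ℚ) * a (m+4) := by
        linear_combination hi
      rw [this, e3, e1, f3, f4]
      push_cast
      ring
  intro n hn
  obtain ⟨m, rfl⟩ : ∃ m, n = m + 1 := ⟨n-1, by omega⟩
  exact (bint4 m).1
end

section
/- Integrality of the non-homogeneous Somos-4 sequences: let p ≥ 1 and q ≥ 1 be integers, and let (a_n)_{n≥1} be the sequence of rational numbers defined by a_1 = a_2 = a_3 = a_4 = 1 and a_{n+4} = (a_{n+3}^p·a_{n+1}^p + a_{n+2}^q)/a_n for n ≥ 1. Then a_n is a positive integer for every n ≥ 1. -/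
lemma somosZmodKey {R : Type*} [CommRing R] (p q : ℕ) (A B C D E F : R)
    (e1 : A * D = C ^ q) (e2 : B * E = C ^ p * D ^ p) (e3 : C * F = D ^ q)
    (e4 : D ^ p * F ^ p + E ^ q = 0) :
    (A ^ p * C ^ p + B ^ q) * (D ^ p * (E ^ q * F ^ p)) = 0 := by
  have h1 : A ^ p * D ^ p = C ^ (q * p) := by rw [← mul_pow, e1, ← pow_mul]
  have h2 : B ^ q * E ^ q = C ^ (p * q) * D ^ (p * q) := by
    rw [← mul_pow, e2, mul_pow, ← pow_mul, ← pow_mul]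
  have h3 : C ^ p * F ^ p = D ^ (q * p) := by rw [← mul_pow, e3, ← pow_mul]
  calc (A ^ p * C ^ p + B ^ q) * (D ^ p * (E ^ q * F ^ p))
      = (A ^ p * D ^ p) * (C ^ p * F ^ p) * E ^ q + (B ^ q * E ^ q) * (D ^ p * F ^ p) := by
        ring
    _ = C ^ (q * p) * D ^ (q * p) * E ^ q + C ^ (p * q) * D ^ (p * q) * (D ^ p * F ^ p) := by
        rw [h1, h2, h3]
    _ = C ^ (q * p) * D ^ (q * p) * (D ^ p * F ^ p + E ^ q) := by rw [mul_comm p q]; ring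
    _ = 0 := by rw [e4, mul_zero]

lemma somosDvd (p q : ℕ) (hp : 1 ≤ p) (hq : 1 ≤ q) (x c1 c2 c3 A B C : ℤ)
    (hco1 : IsCoprime x c1) (hco2 : IsCoprime x c2) (hco3 : IsCoprime x c3)
    (r1 : A * c1 = B ^ p * x ^ p + C ^ q)
    (r2 : B * c2 = C ^ p * c1 ^ p + x ^ q)
    (r3 : C * c3 = x ^ p * c2 ^ p + c1 ^ q)
    (r4 : x ∣ c1 ^ p * c3 ^ p + c2 ^ q) :
    x ∣ A ^ p * C ^ p + B ^ q := by
  set m := x.natAbs with hm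
  have hx0 : ((x : ℤ) : ZMod m) = 0 := by
    rw [ZMod.intCast_zmod_eq_zero_iff_dvd]
    exact Int.natAbs_dvd.mpr dvd_rfl
  have unit : ∀ c : ℤ, IsCoprime x c → IsUnit ((c : ZMod m)) := by
    rintro c ⟨u, v, huv⟩
    have : ((u * x + v * c : ℤ) : ZMod m) = 1 := by rw [huv]; norm_cast
    push_cast at this
    rw [hx0, mul_zero, zero_add] at this
    exact IsUnit.of_mul_eq_one _ (by rw [mul_comm]; exact this)
  have hp0 : p ≠ 0 := by omega
  have hq0 : q ≠ 0 := by omega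
  have e1 : ((A : ZMod m)) * (c1 : ZMod m) = (C : ZMod m) ^ q := by
    have := congrArg (fun z : ℤ => (z : ZMod m)) r1
    push_cast at this
    rw [hx0, zero_pow hp0, mul_zero, zero_add] at this
    exact this
  have e2 : ((B : ZMod m)) * (c2 : ZMod m) = (C : ZMod m) ^ p * (c1 : ZMod m) ^ p := by
    have := congrArg (fun z : ℤ => (z : ZMod m)) r2
    push_cast at this
    rw [hx0, zero_pow hq0, add_zero] at this
    exact this
  have e3 : ((C : ZMod m)) * (c3 : ZMod m) = (c1 : ZMod m) ^ q := by
    have := congrArg (fun z : ℤ => (z : ZMod m)) r3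
    push_cast at this
    rw [hx0, zero_pow hp0, zero_mul, zero_add] at this
    exact this
  have e4 : (c1 : ZMod m) ^ p * (c3 : ZMod m) ^ p + (c2 : ZMod m) ^ q = 0 := by
    have : ((c1 ^ p * c3 ^ p + c2 ^ q : ℤ) : ZMod m) = 0 := by
      rw [ZMod.intCast_zmod_eq_zero_iff_dvd]
      exact Int.natAbs_dvd.mpr r4
    push_cast at this
    exact this
  have key := somosZmodKey p q (A : ZMod m) (B : ZMod m) (C : ZMod m)
    (c1 : ZMod m) (c2 : ZMod m) (c3 : ZMod m) e1 e2 e3 e4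
  have hu : IsUnit ((c1 : ZMod m) ^ p * ((c2 : ZMod m) ^ q * (c3 : ZMod m) ^ p)) :=
    ((unit c1 hco1).pow p).mul (((unit c2 hco2).pow q).mul ((unit c3 hco3).pow p))
  have hz : (((A ^ p * C ^ p + B ^ q : ℤ)) : ZMod m) = 0 := by
    push_cast
    exact (hu.mul_left_eq_zero).mp (by linear_combination key)
  rw [ZMod.intCast_zmod_eq_zero_iff_dvd] at hz
  exact Int.natAbs_dvd.mp hz

/-- The integrality/positivity window invariant for Somos-4. -/
def somosI (a : ℕ → ℚ) (i : ℕ) : Prop := 0 < (a i).num ∧ a i = ((a i).num : ℚ)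

/-- Integrality of the non-homogeneous Somos-4 sequences. -/
theorem nonhomogeneous_somos4_positive_integer (p q : ℕ) (hp : 1 ≤ p) (hq : 1 ≤ q)
    (a : ℕ → ℚ)
    (h1 : a 1 = 1) (h2 : a 2 = 1) (h3 : a 3 = 1) (h4 : a 4 = 1)
    (hrec : ∀ n, 1 ≤ n →
      a (n + 4) = (a (n + 3) ^ p * a (n + 1) ^ p + a (n + 2) ^ q) / a n) :
    ∀ n, 1 ≤ n → ∃ k : ℤ, 0 < k ∧ a n = (k : ℚ) := by
  obtain ⟨p, rfl⟩ : ∃ p', p = p' + 1 := ⟨p - 1, by omega⟩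
  obtain ⟨q, rfl⟩ : ∃ q', q = q' + 1 := ⟨q - 1, by omega⟩
  have hK1 : (a 1).num = 1 := by rw [h1]; rfl
  have hK2 : (a 2).num = 1 := by rw [h2]; rfl
  have hK3 : (a 3).num = 1 := by rw [h3]; rfl
  have hK4 : (a 4).num = 1 := by rw [h4]; rfl
  have hIbase : ∀ i, 1 ≤ i → i ≤ 4 → somosI a i := by
    intro i hi1 hi4
    interval_cases i
    · exact ⟨by rw [hK1]; norm_num, by rw [hK1, h1]; norm_num⟩
    · exact ⟨by rw [hK2]; norm_num, by rw [hK2, h2]; norm_num⟩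
    · exact ⟨by rw [hK3]; norm_num, by rw [hK3, h3]; norm_num⟩
    · exact ⟨by rw [hK4]; norm_num, by rw [hK4, h4]; norm_num⟩
  -- integer form of the recurrence
  have rec_int : ∀ j, 1 ≤ j → somosI a j → somosI a (j+1) → somosI a (j+2) →
      somosI a (j+3) → somosI a (j+4) →
      (a (j+4)).num * (a j).num =
        (a (j+3)).num ^ (p+1) * (a (j+1)).num ^ (p+1) + (a (j+2)).num ^ (q+1) := by
    intro j hj ⟨hp0, he0⟩ ⟨hp1, he1⟩ ⟨hp2, he2⟩ ⟨hp3, he3⟩ ⟨hp4, he4⟩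
    have hne : a j ≠ 0 := by
      rw [he0]
      exact_mod_cast hp0.ne'
    have h := hrec j hj
    rw [eq_div_iff hne] at h
    rw [he0, he1, he2, he3, he4] at h
    exact_mod_cast h
  -- construction of the new integer term
  have build : ∀ j, 1 ≤ j → somosI a j → somosI a (j+1) → somosI a (j+2) →
      somosI a (j+3) →
      ((a j).num ∣ (a (j+3)).num ^ (p+1) * (a (j+1)).num ^ (p+1) + (a (j+2)).num ^ (q+1)) →
      somosI a (j+4) := by
    intro j hj ⟨hp0, he0⟩ ⟨hp1, he1⟩ ⟨hp2, he2⟩ ⟨hp3, he3⟩ hdvd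
    obtain ⟨t, ht⟩ := hdvd
    have hNpos : 0 < (a (j+3)).num ^ (p+1) * (a (j+1)).num ^ (p+1) + (a (j+2)).num ^ (q+1) :=
      add_pos (mul_pos (pow_pos hp3 _) (pow_pos hp1 _)) (pow_pos hp2 _)
    have htpos : 0 < t := by nlinarith
    have hneq : ((a j).num : ℚ) ≠ 0 := by exact_mod_cast hp0.ne'
    have hz : a (j+4) = (t : ℚ) := by
      have h := hrec j hj
      rw [he0, he1, he2, he3] at h
      have hcast : ((a (j+3)).num : ℚ) ^ (p+1) * ((a (j+1)).num : ℚ) ^ (p+1)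
          + ((a (j+2)).num : ℚ) ^ (q+1) = ((a j).num : ℚ) * (t : ℚ) := by
        exact_mod_cast congrArg (fun z : ℤ => (z : ℚ)) ht
      rw [h, hcast, mul_div_cancel_left₀ _ hneq]
    have hnum : (a (j+4)).num = t := by rw [hz]; exact Rat.num_intCast t
    exact ⟨by rw [hnum]; exact htpos, by rw [hnum, hz]⟩
  -- main strong induction
  have main : ∀ n, 1 ≤ n →
      (somosI a n ∧ somosI a (n+1) ∧ somosI a (n+2) ∧ somosI a (n+3)) ∧
      (IsCoprime (a n).num (a (n+1)).num ∧ IsCoprime (a n).num (a (n+2)).num ∧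
       IsCoprime (a n).num (a (n+3)).num ∧ IsCoprime (a (n+1)).num (a (n+2)).num ∧
       IsCoprime (a (n+1)).num (a (n+3)).num ∧ IsCoprime (a (n+2)).num (a (n+3)).num) := by
    intro n
    induction n using Nat.strong_induction_on with
    | _ n IH =>
      intro hn
      rcases Nat.lt_or_ge n 2 with hsm | hbig
      · -- base case n = 1
        have hn1 : n = 1 := by omega
        subst hn1
        refine ⟨⟨hIbase 1 (by norm_num) (by norm_num), hIbase 2 (by norm_num) (by norm_num),
          hIbase 3 (by norm_num) (by norm_num), hIbase 4 (by norm_num) (by norm_num)⟩, ?_⟩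
        rw [hK1, hK2, hK3, hK4]
        exact ⟨isCoprime_one_left, isCoprime_one_left, isCoprime_one_left,
          isCoprime_one_left, isCoprime_one_left, isCoprime_one_left⟩
      · obtain ⟨j, rfl⟩ : ∃ j, n = j + 1 := ⟨n - 1, by omega⟩
        have hj : 1 ≤ j := by omega
        obtain ⟨⟨Ij, Ij1, Ij2, Ij3⟩, c01, c02, c03, c12, c13, c23⟩ :=
          IH j (by omega) hj
        -- divisibility of the numerator by (a j).num
        have hdvd : (a j).num ∣
            (a (j+3)).num ^ (p+1) * (a (j+1)).num ^ (p+1) + (a (j+2)).num ^ (q+1) := by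
          rcases Nat.lt_or_ge j 5 with hj5 | hj5
          · have : (a j).num = 1 := by interval_cases j <;> assumption
            rw [this]
            exact one_dvd _
          · obtain ⟨i, rfl⟩ : ∃ i, j = i + 4 := ⟨j - 4, by omega⟩
            have hi : 1 ≤ i := by omega
            obtain ⟨⟨Wi0, Wi1, Wi2, Wi3⟩, _⟩ := IH i (by omega) hi
            obtain ⟨⟨_, _, _, Wi4⟩, d01, d02, d03, _⟩ := IH (i+1) (by omega) (by omega)
            -- d01 : IsCoprime (a (i+1)).num (a (i+2)).num, etc.  window i+1..i+4
            obtain ⟨⟨_, _, _, _⟩, _, _, e03, _, e13, e23⟩ := IH (i+1) (by omega) (by omega)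
            -- e03 : IsCoprime (a (i+1)).num (a (i+4)).num
            -- e13 : IsCoprime (a (i+2)).num (a (i+4)).num
            -- e23 : IsCoprime (a (i+3)).num (a (i+4)).num
            have r4 := rec_int i hi Wi0 Wi1 Wi2 Wi3 Wi4
            have r3 := rec_int (i+1) (by omega) Wi1 Wi2 Wi3 Wi4 Ij1
            have r2 := rec_int (i+2) (by omega) Wi2 Wi3 Wi4 Ij1 Ij2
            have r1 := rec_int (i+3) (by omega) Wi3 Wi4 Ij1 Ij2 Ij3
            have hdvd4 : (a (i+4)).num ∣
                (a (i+3)).num ^ (p+1) * (a (i+1)).num ^ (p+1) + (a (i+2)).num ^ (q+1) :=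
              ⟨(a i).num, r4.symm⟩
            have := somosDvd (p+1) (q+1) (by omega) (by omega)
              ((a (i+4)).num) ((a (i+3)).num) ((a (i+2)).num) ((a (i+1)).num)
              ((a (i+7)).num) ((a (i+6)).num) ((a (i+5)).num)
              e23.symm e13.symm e03.symm
              (by rw [r1]) (by rw [r2]) (by rw [r3]) hdvd4
            exact this
        have Ij4 : somosI a (j+4) := build j hj Ij Ij1 Ij2 Ij3 hdvd
        have recj := rec_int j hj Ij Ij1 Ij2 Ij3 Ij4
        -- new coprimality facts
        have n13 : IsCoprime (a (j+1)).num (a (j+4)).num := by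
          have h := (c12.pow_right (n := q+1))
          have e : (a (j+4)).num * (a j).num =
              (a (j+2)).num ^ (q+1) + (a (j+1)).num *
                ((a (j+1)).num ^ p * (a (j+3)).num ^ (p+1)) := by
            rw [recj]; ring
          have h2 := h.add_mul_left_right ((a (j+1)).num ^ p * (a (j+3)).num ^ (p+1))
          rw [← e] at h2
          exact h2.of_mul_right_left
        have n23 : IsCoprime (a (j+2)).num (a (j+4)).num := by
          have h := ((c23.pow_right (n := p+1)).mul_right (c12.symm.pow_right (n := p+1)))
          have e : (a (j+4)).num * (a j).num =
              (a (j+3)).num ^ (p+1) * (a (j+1)).num ^ (p+1) +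
                (a (j+2)).num * (a (j+2)).num ^ q := by
            rw [recj]; ring
          have h2 := h.add_mul_left_right ((a (j+2)).num ^ q)
          rw [← e] at h2
          exact h2.of_mul_right_left
        have n33 : IsCoprime (a (j+3)).num (a (j+4)).num := by
          have h := (c23.symm.pow_right (n := q+1))
          have e : (a (j+4)).num * (a j).num =
              (a (j+2)).num ^ (q+1) + (a (j+3)).num *
                ((a (j+3)).num ^ p * (a (j+1)).num ^ (p+1)) := by
            rw [recj]; ring
          have h2 := h.add_mul_left_right ((a (j+3)).num ^ p * (a (j+1)).num ^ (p+1))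
          rw [← e] at h2
          exact h2.of_mul_right_left
        exact ⟨⟨Ij1, Ij2, Ij3, Ij4⟩, c12, c13, n13, c23, n23, n33⟩
  intro n hn
  obtain ⟨⟨⟨hpos, heq⟩, _⟩, _⟩ := main n hn
  exact ⟨(a n).num, hpos, heq⟩
end

section
/- (Corollary, part (ii)) Let p ≥ 1 and let (a_n)_{n≥1} be the positive integer sequence defined by a_1 = a_2 = a_3 = a_4 = 1 and a_{n+4} = (a_{n+3}^p·a_{n+1}^p + a_{n+2}^2)/a_n. Let b_1, b_2, b_3, b_4 be arbitrary integers and define rational numbers b_n for n ≥ 5 by b_{n+4} = (p·a_{n+3}^{p−1}·a_{n+1}^p·b_{n+3} + p·a_{n+3}^p·a_{n+1}^{p−1}·b_{n+1} + 2·a_{n+2}·b_{n+2} + a_{n+3}^p·a_{n+1}^p − a_{n+4}·b_n)/a_n. Then b_n is an integer for every n ≥ 1. -/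
open TrivSqZeroExt

lemma somosAux_coprime_lift {x y : DualNumber ℤ} (h : IsCoprime x.fst y.fst) :
    IsCoprime x y := by
  obtain ⟨u, v, huv⟩ := h
  have hunit : IsUnit (inl u * x + inl v * y : DualNumber ℤ) := by
    rw [isUnit_iff_isUnit_fst]
    have : (inl u * x + inl v * y : DualNumber ℤ).fst = 1 := by
      simp [fst_mul, huv]
    rw [this]; exact isUnit_one
  obtain ⟨w, hw⟩ := hunit
  refine ⟨(↑w⁻¹ : DualNumber ℤ) * inl u, (↑w⁻¹ : DualNumber ℤ) * inl v, ?_⟩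
  have hinv : (↑w⁻¹ : DualNumber ℤ) * (inl u * x + inl v * y) = 1 := by
    rw [← hw]; exact w.inv_mul
  linear_combination hinv

set_option maxHeartbeats 1000000 in
set_option synthInstance.maxHeartbeats 400000 in
lemma somosAux_key (p : ℕ) (hp : 1 ≤ p) (lam u0 u1 u2 u3 u4 u5 u6 u7 : DualNumber ℤ)
    (e1 : u4 * u0 = lam * (u3 ^ p * u1 ^ p) + u2 ^ 2)
    (e2 : u5 * u1 = lam * (u4 ^ p * u2 ^ p) + u3 ^ 2)
    (e3 : u6 * u2 = lam * (u5 ^ p * u3 ^ p) + u4 ^ 2)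
    (e4 : u7 * u3 = lam * (u6 ^ p * u4 ^ p) + u5 ^ 2)
    (hc : IsCoprime (lam * (u3 ^ p * u1 ^ p) * u2 ^ 2) u4) :
    u4 ∣ lam * (u7 ^ p * u5 ^ p) + u6 ^ 2 := by
  have hp0 : p ≠ 0 := by omega
  apply (hc.symm).dvd_of_dvd_mul_left
  rw [← Ideal.Quotient.eq_zero_iff_dvd]
  have h4 : Ideal.Quotient.mk (Ideal.span {u4}) u4 = 0 := by
    rw [Ideal.Quotient.eq_zero_iff_dvd]
  have t1 := congrArg (Ideal.Quotient.mk (Ideal.span {u4})) e1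
  have t2 := congrArg (Ideal.Quotient.mk (Ideal.span {u4})) e2
  have t3 := congrArg (Ideal.Quotient.mk (Ideal.span {u4})) e3
  have t4 := congrArg (Ideal.Quotient.mk (Ideal.span {u4})) e4
  simp only [map_mul, map_add, map_pow, h4, zero_mul, mul_zero, zero_pow hp0,
    zero_add, add_zero] at t1 t2 t3 t4
  simp only [map_mul, map_add, map_pow]
  set L := Ideal.Quotient.mk (Ideal.span {u4}) lam
  set U1 := Ideal.Quotient.mk (Ideal.span {u4}) u1
  set U2 := Ideal.Quotient.mk (Ideal.span {u4}) u2
  set U3 := Ideal.Quotient.mk (Ideal.span {u4}) u3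
  set U5 := Ideal.Quotient.mk (Ideal.span {u4}) u5
  set U6 := Ideal.Quotient.mk (Ideal.span {u4}) u6
  set U7 := Ideal.Quotient.mk (Ideal.span {u4}) u7
  have h2p : U5 ^ p * U1 ^ p = (U3 ^ p) ^ 2 := by
    rw [← mul_pow, t2, ← pow_mul, ← pow_mul, mul_comm 2 p]
  have h4p : U7 ^ p * U3 ^ p = (U5 ^ p) ^ 2 := by
    rw [← mul_pow, t4, ← pow_mul, ← pow_mul, mul_comm 2 p]
  have h3s : U6 ^ 2 * U2 ^ 2 = L ^ 2 * (U5 ^ p) ^ 2 * (U3 ^ p) ^ 2 := by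
    rw [← mul_pow, t3]; ring
  linear_combination (L ^ 2 * U2 ^ 2 * (U5 ^ p * U1 ^ p)) * h4p
    + (L ^ 2 * U2 ^ 2 * (U5 ^ p) ^ 2) * h2p - (U2 ^ 2 * U6 ^ 2) * t1 - U2 ^ 2 * h3s

lemma somosAux_toR (p : ℕ) (u w x y z : DualNumber ℤ) (hu : (u.fst : ℚ) ≠ 0)
    (ha : ((w.fst : ℤ) : ℚ) = (((x.fst : ℤ) : ℚ) ^ p * ((y.fst : ℤ) : ℚ) ^ p
      + ((z.fst : ℤ) : ℚ) ^ 2) / ((u.fst : ℤ) : ℚ))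
    (hb : ((w.snd : ℤ) : ℚ) = ((p : ℚ) * ((x.fst : ℤ) : ℚ) ^ (p - 1) * ((y.fst : ℤ) : ℚ) ^ p * ((x.snd : ℤ) : ℚ)
        + (p : ℚ) * ((x.fst : ℤ) : ℚ) ^ p * ((y.fst : ℤ) : ℚ) ^ (p - 1) * ((y.snd : ℤ) : ℚ)
        + 2 * ((z.fst : ℤ) : ℚ) * ((z.snd : ℤ) : ℚ)
        + ((x.fst : ℤ) : ℚ) ^ p * ((y.fst : ℤ) : ℚ) ^ p
        - ((w.fst : ℤ) : ℚ) * ((u.snd : ℤ) : ℚ)) / ((u.fst : ℤ) : ℚ)) :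
    w * u = (1 + (DualNumber.eps : DualNumber ℤ)) * (x ^ p * y ^ p) + z ^ 2 := by
  rw [eq_div_iff hu] at ha hb
  have h1 : w.fst * u.fst = x.fst ^ p * y.fst ^ p + z.fst ^ 2 := by exact_mod_cast ha
  have h2 : w.snd * u.fst = (p : ℤ) * x.fst ^ (p - 1) * y.fst ^ p * x.snd
      + (p : ℤ) * x.fst ^ p * y.fst ^ (p - 1) * y.snd
      + 2 * z.fst * z.snd + x.fst ^ p * y.fst ^ p - w.fst * u.snd := by exact_mod_cast hb
  refine TrivSqZeroExt.ext ?_ ?_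
  · simp only [fst_mul, fst_add, fst_one, DualNumber.fst_eps, fst_pow, add_zero, one_mul]
    linear_combination h1
  · simp only [snd_mul, snd_add, fst_add, fst_mul, fst_one, fst_pow, snd_one,
      DualNumber.fst_eps, DualNumber.snd_eps, snd_pow, smul_eq_mul,
      MulOpposite.smul_eq_mul_unop, MulOpposite.unop_op, nsmul_eq_mul,
      Nat.pred_eq_sub_one, add_zero, zero_add, one_mul, mul_one]
    push_cast
    ring_nf
    linear_combination h2

/-- Corollary (ii): the extension of the non-homogeneous Somos-4 sequence
with q = 2 obtained by deforming the first monomial is integer. -/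
theorem nonhomogeneous_somos4_extension_ii_integer (p : ℕ) (hp : 1 ≤ p)
    (a : ℕ → ℚ)
    (h1 : a 1 = 1) (h2 : a 2 = 1) (h3 : a 3 = 1) (h4 : a 4 = 1)
    (hrec : ∀ n, 1 ≤ n →
      a (n + 4) = (a (n + 3) ^ p * a (n + 1) ^ p + a (n + 2) ^ 2) / a n)
    (b : ℕ → ℚ) (b1 b2 b3 b4 : ℤ)
    (hb1 : b 1 = (b1 : ℚ)) (hb2 : b 2 = (b2 : ℚ)) (hb3 : b 3 = (b3 : ℚ)) (hb4 : b 4 = (b4 : ℚ))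
    (hbrec : ∀ n, 1 ≤ n →
      b (n + 4) = ((p : ℚ) * a (n + 3) ^ (p - 1) * a (n + 1) ^ p * b (n + 3)
        + (p : ℚ) * a (n + 3) ^ p * a (n + 1) ^ (p - 1) * b (n + 1)
        + 2 * a (n + 2) * b (n + 2) + a (n + 3) ^ p * a (n + 1) ^ p
        - a (n + 4) * b n) / a n) :
    ∀ n, 1 ≤ n → ∃ k : ℤ, b n = (k : ℚ) := by
  set Lam : DualNumber ℤ := 1 + DualNumber.eps with hLam
  -- invariant
  suffices H : ∀ n, 1 ≤ n → ∃ A : DualNumber ℤ,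
      a n = ((A.fst : ℤ) : ℚ) ∧ b n = ((A.snd : ℤ) : ℚ) ∧ 0 < A.fst ∧
      (∀ j, 1 ≤ j → j < n → n < j + 4 → IsCoprime (a j).num A.fst) by
    intro n hn
    obtain ⟨A, -, hAb, -, -⟩ := H n hn
    exact ⟨A.snd, hAb⟩
  intro n
  induction n using Nat.strong_induction_on with
  | _ n IH =>
  intro hn
  rcases Nat.lt_or_ge n 5 with h5 | h5
  · -- base cases n = 1, 2, 3, 4
    have base : ∀ (m : ℕ) (c : ℤ), a m = 1 → b m = (c : ℚ) →
        ∃ A : DualNumber ℤ,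
          a m = ((A.fst : ℤ) : ℚ) ∧ b m = ((A.snd : ℤ) : ℚ) ∧ 0 < A.fst ∧
          (∀ j, 1 ≤ j → j < m → m < j + 4 → IsCoprime (a j).num A.fst) := by
      intro m c ham hbm
      refine ⟨((1, c) : ℤ × ℤ), ?_, ?_, ?_, ?_⟩
      · rw [ham]; norm_num [fst_mk]
      · rw [hbm]; norm_num [snd_mk]
      · norm_num [fst_mk]
      · intro j _ _ _
        rw [fst_mk]
        exact isCoprime_one_right
    interval_cases n
    · exact base 1 b1 h1 hb1
    · exact base 2 b2 h2 hb2
    · exact base 3 b3 h3 hb3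
    · exact base 4 b4 h4 hb4
  · -- inductive step : n = k + 4 with k ≥ 1
    obtain ⟨k, rfl⟩ : ∃ k, n = k + 4 := ⟨n - 4, by omega⟩
    have hk1 : 1 ≤ k := by omega
    obtain ⟨U, hUa, hUb, hUpos, hUcop⟩ := IH k (by omega) (by omega)
    obtain ⟨Y, hYa, hYb, hYpos, hYcop⟩ := IH (k + 1) (by omega) (by omega)
    obtain ⟨Z, hZa, hZb, hZpos, hZcop⟩ := IH (k + 2) (by omega) (by omega)
    obtain ⟨X, hXa, hXb, hXpos, hXcop⟩ := IH (k + 3) (by omega) (by omega)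
    have hune : ((U.fst : ℤ) : ℚ) ≠ 0 := by
      exact_mod_cast (Int.cast_ne_zero (α := ℚ)).2 (ne_of_gt hUpos)
    have hnum : ∀ (m : ℕ) (A : DualNumber ℤ), a m = ((A.fst : ℤ) : ℚ) → (a m).num = A.fst := by
      intro m A hm; rw [hm, Rat.num_intCast]
    -- the key divisibility
    have hdvd : U ∣ Lam * (X ^ p * Y ^ p) + Z ^ 2 := by
      rcases Nat.lt_or_ge k 5 with hk5 | hk5
      · -- U is a unit since a k = 1
        have hU1 : U.fst = 1 := by
          have : ((U.fst : ℤ) : ℚ) = 1 := by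
            rw [← hUa]; interval_cases k <;> assumption
          exact_mod_cast this
        have : IsUnit U := by
          rw [isUnit_iff_isUnit_fst, hU1]; exact isUnit_one
        exact this.dvd
      · obtain ⟨j, rfl⟩ : ∃ j, k = j + 4 := ⟨k - 4, by omega⟩
        have hj1 : 1 ≤ j := by omega
        obtain ⟨u0, h0a, h0b, h0pos, h0cop⟩ := IH j (by omega) (by omega)
        obtain ⟨u1, h1a, h1b, h1pos, h1cop⟩ := IH (j + 1) (by omega) (by omega)
        obtain ⟨u2, h2a, h2b, h2pos, h2cop⟩ := IH (j + 2) (by omega) (by omega)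
        obtain ⟨u3, h3a, h3b, h3pos, h3cop⟩ := IH (j + 3) (by omega) (by omega)
        -- normalize indices of U, Y, Z, X
        have hYa' : a (j + 5) = ((Y.fst : ℤ) : ℚ) := by rw [show j + 5 = j + 4 + 1 by omega]; exact hYa
        have hYb' : b (j + 5) = ((Y.snd : ℤ) : ℚ) := by rw [show j + 5 = j + 4 + 1 by omega]; exact hYb
        have hZa' : a (j + 6) = ((Z.fst : ℤ) : ℚ) := by rw [show j + 6 = j + 4 + 2 by omega]; exact hZa
        have hZb' : b (j + 6) = ((Z.snd : ℤ) : ℚ) := by rw [show j + 6 = j + 4 + 2 by omega]; exact hZb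
        have hXa' : a (j + 7) = ((X.fst : ℤ) : ℚ) := by rw [show j + 7 = j + 4 + 3 by omega]; exact hXa
        have hXb' : b (j + 7) = ((X.snd : ℤ) : ℚ) := by rw [show j + 7 = j + 4 + 3 by omega]; exact hXb
        have hne : ∀ (A : DualNumber ℤ), 0 < A.fst → ((A.fst : ℤ) : ℚ) ≠ 0 := by
          intro A hA; exact_mod_cast (Int.cast_ne_zero (α := ℚ)).2 (ne_of_gt hA)
        -- four dual-number equations
        have e1 : U * u0 = Lam * (u3 ^ p * u1 ^ p) + u2 ^ 2 := by
          have r := hrec j hj1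
          have rb := hbrec j hj1
          rw [show j + 4 = j + 4 from rfl] at r rb
          rw [h3a, h1a, h2a, h0a, hUa] at r
          rw [h3a, h1a, h2a, h0a, hUa, h3b, h1b, h2b, h0b, hUb] at rb
          exact somosAux_toR p u0 U u3 u1 u2 (hne u0 h0pos) r rb
        have e2 : Y * u1 = Lam * (U ^ p * u2 ^ p) + u3 ^ 2 := by
          have r := hrec (j + 1) (by omega)
          have rb := hbrec (j + 1) (by omega)
          rw [show j + 1 + 4 = j + 5 by omega, show j + 1 + 3 = j + 4 by omega,
            show j + 1 + 2 = j + 3 by omega, show j + 1 + 1 = j + 2 by omega] at r rb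
          rw [hUa, h2a, h3a, h1a, hYa'] at r
          rw [hUa, h2a, h3a, h1a, hYa', hUb, h2b, h3b, h1b, hYb'] at rb
          exact somosAux_toR p u1 Y U u2 u3 (hne u1 h1pos) r rb
        have e3 : Z * u2 = Lam * (Y ^ p * u3 ^ p) + U ^ 2 := by
          have r := hrec (j + 2) (by omega)
          have rb := hbrec (j + 2) (by omega)
          rw [show j + 2 + 4 = j + 6 by omega, show j + 2 + 3 = j + 5 by omega,
            show j + 2 + 2 = j + 4 by omega, show j + 2 + 1 = j + 3 by omega] at r rb
          rw [hYa', h3a, hUa, h2a, hZa'] at r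
          rw [hYa', h3a, hUa, h2a, hZa', hYb', h3b, hUb, h2b, hZb'] at rb
          exact somosAux_toR p u2 Z Y u3 U (hne u2 h2pos) r rb
        have e4 : X * u3 = Lam * (Z ^ p * U ^ p) + Y ^ 2 := by
          have r := hrec (j + 3) (by omega)
          have rb := hbrec (j + 3) (by omega)
          rw [show j + 3 + 4 = j + 7 by omega, show j + 3 + 3 = j + 6 by omega,
            show j + 3 + 2 = j + 5 by omega, show j + 3 + 1 = j + 4 by omega] at r rb
          rw [hZa', hUa, hYa', h3a, hXa'] at r
          rw [hZa', hUa, hYa', h3a, hXa', hZb', hUb, hYb', h3b, hXb'] at rb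
          exact somosAux_toR p u3 X Z U Y (hne u3 h3pos) r rb
        -- coprimality
        have cop3 : IsCoprime u3.fst U.fst := by
          have := hUcop (j + 3) (by omega) (by omega) (by omega)
          rwa [hnum (j + 3) u3 h3a] at this
        have cop2 : IsCoprime u2.fst U.fst := by
          have := hUcop (j + 2) (by omega) (by omega) (by omega)
          rwa [hnum (j + 2) u2 h2a] at this
        have cop1 : IsCoprime u1.fst U.fst := by
          have := hUcop (j + 1) (by omega) (by omega) (by omega)
          rwa [hnum (j + 1) u1 h1a] at this
        have hc : IsCoprime (Lam * (u3 ^ p * u1 ^ p) * u2 ^ 2) U := by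
          apply somosAux_coprime_lift
          have hfst : (Lam * (u3 ^ p * u1 ^ p) * u2 ^ 2).fst
              = u3.fst ^ p * u1.fst ^ p * u2.fst ^ 2 := by
            simp [hLam, fst_mul, fst_pow]
          rw [hfst]
          exact (cop3.pow_left.mul_left cop1.pow_left).mul_left cop2.pow_left
        exact somosAux_key p hp Lam u0 u1 u2 u3 U Y Z X e1 e2 e3 e4 hc
    -- extract the new term
    obtain ⟨W, hW⟩ := hdvd
    have hfstW : X.fst ^ p * Y.fst ^ p + Z.fst ^ 2 = U.fst * W.fst := by
      have := congrArg TrivSqZeroExt.fst hW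
      simpa [hLam, fst_mul, fst_pow, fst_add] using this
    have hsndW : X.fst ^ p * Y.fst ^ p
        + (p : ℤ) * X.fst ^ (p - 1) * X.snd * Y.fst ^ p
        + (p : ℤ) * Y.fst ^ (p - 1) * Y.snd * X.fst ^ p
        + 2 * Z.fst * Z.snd = U.fst * W.snd + U.snd * W.fst := by
      have := congrArg TrivSqZeroExt.snd hW
      simp only [hLam, snd_mul, snd_add, fst_add, fst_mul, fst_one, fst_pow, snd_one,
        DualNumber.fst_eps, DualNumber.snd_eps, snd_pow, smul_eq_mul,
        MulOpposite.smul_eq_mul_unop, MulOpposite.unop_op, nsmul_eq_mul,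
        Nat.pred_eq_sub_one, add_zero, zero_add, one_mul, mul_one] at this
      push_cast at this ⊢
      linear_combination this
    have han : a (k + 4) = ((W.fst : ℤ) : ℚ) := by
      rw [hrec k hk1, hXa, hYa, hZa, hUa, div_eq_iff hune]
      have : ((X.fst ^ p * Y.fst ^ p + Z.fst ^ 2 : ℤ) : ℚ)
          = ((U.fst * W.fst : ℤ) : ℚ) := by exact_mod_cast congrArg (fun t : ℤ => (t : ℚ)) hfstW
      push_cast at this
      linear_combination this
    have hbn : b (k + 4) = ((W.snd : ℤ) : ℚ) := by
      rw [hbrec k hk1, hXa, hXb, hYa, hYb, hZa, hZb, hUa, hUb, han, div_eq_iff hune]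
      have : ((X.fst ^ p * Y.fst ^ p + (p : ℤ) * X.fst ^ (p - 1) * X.snd * Y.fst ^ p
          + (p : ℤ) * Y.fst ^ (p - 1) * Y.snd * X.fst ^ p + 2 * Z.fst * Z.snd : ℤ) : ℚ)
          = ((U.fst * W.snd + U.snd * W.fst : ℤ) : ℚ) := by
        exact_mod_cast congrArg (fun t : ℤ => (t : ℚ)) hsndW
      push_cast at this
      linear_combination this
    have hWpos : 0 < W.fst := by
      nlinarith [hfstW, hUpos, mul_pos (pow_pos hXpos p) (pow_pos hYpos p), sq_nonneg Z.fst]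
    refine ⟨W, han, hbn, hWpos, ?_⟩
    -- coprimality of the new term with its three predecessors
    have czx : IsCoprime Z.fst X.fst := by
      have := hXcop (k + 2) (by omega) (by omega) (by omega)
      rwa [hnum (k + 2) Z hZa] at this
    have cyx : IsCoprime Y.fst X.fst := by
      have := hXcop (k + 1) (by omega) (by omega) (by omega)
      rwa [hnum (k + 1) Y hYa] at this
    have cyz : IsCoprime Y.fst Z.fst := by
      have := hZcop (k + 1) (by omega) (by omega) (by omega)
      rwa [hnum (k + 1) Y hYa] at this
    have hpexp : ∀ t : ℤ, t ^ (p - 1) * t = t ^ p := by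
      intro t; rw [← pow_succ]; congr 1; omega
    intro j' hj'1 hj'2 hj'3
    rcases (by omega : j' = k + 1 ∨ j' = k + 2 ∨ j' = k + 3) with rfl | rfl | rfl
    · -- coprime with Y.fst
      rw [hnum (k + 1) Y hYa]
      have base : IsCoprime (Z.fst ^ 2 + Y.fst * (X.fst ^ p * Y.fst ^ (p - 1))) Y.fst :=
        (cyz.symm.pow_left).add_mul_left_left _
      have heq : Z.fst ^ 2 + Y.fst * (X.fst ^ p * Y.fst ^ (p - 1)) = U.fst * W.fst := by
        rw [← hfstW]; linear_combination X.fst ^ p * hpexp Y.fst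
      rw [heq] at base
      exact (base.of_mul_left_right).symm
    · -- coprime with Z.fst
      rw [hnum (k + 2) Z hZa]
      have base : IsCoprime (X.fst ^ p * Y.fst ^ p + Z.fst * Z.fst) Z.fst :=
        ((czx.symm.pow_left).mul_left (cyz.pow_left)).add_mul_left_left _
      have heq : X.fst ^ p * Y.fst ^ p + Z.fst * Z.fst = U.fst * W.fst := by
        rw [← hfstW]; ring
      rw [heq] at base
      exact (base.of_mul_left_right).symm
    · -- coprime with X.fst
      rw [hnum (k + 3) X hXa]
      have base : IsCoprime (Z.fst ^ 2 + X.fst * (X.fst ^ (p - 1) * Y.fst ^ p)) X.fst :=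
        (czx.pow_left).add_mul_left_left _
      have heq : Z.fst ^ 2 + X.fst * (X.fst ^ (p - 1) * Y.fst ^ p) = U.fst * W.fst := by
        rw [← hfstW]; linear_combination Y.fst ^ p * hpexp X.fst
      rw [heq] at base
      exact (base.of_mul_left_right).symm
end

section
/- (Linear-system form of the classification of period-1 weight functions) Let N ≥ 2 and let c_2, …, c_N be nonnegative integers. Consider integer tuples (w_1, …, w_N) satisfying the linear system: w_N = −w_1 and w_{i−1} = w_i + c_i·w_1 for all 2 ≤ i ≤ N. Then: (1) every solution satisfies w_i = (1 − (c_2 + ⋯ + c_i))·w_1 for all 1 ≤ i ≤ N (with the empty sum for i = 1), so the solution is uniquely determined by w_1, i.e., unique up to an integer multiple; and (2) there exists a solution with w_1 ≠ 0 if and only if c_2 + ⋯ + c_N = 2. -/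
lemma icc_sum_step (c : ℕ → ℤ) {i : ℕ} (hi : 2 ≤ i) :
    ∑ j ∈ Finset.Icc 2 i, c j = (∑ j ∈ Finset.Icc 2 (i - 1), c j) + c i := by
  obtain ⟨k, rfl⟩ := Nat.exists_eq_add_of_le hi
  have : 2 + k - 1 = 1 + k := by omega
  rw [this]
  have h : Finset.Icc 2 (2 + k) = insert (2 + k) (Finset.Icc 2 (1 + k)) := by
    ext x; simp only [Finset.mem_Icc, Finset.mem_insert]; omega
  rw [h, Finset.sum_insert (by simp only [Finset.mem_Icc]; omega)]
  ring

/-- Linear-system form of the classification of period-1 weight functions: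
solutions of the system w_N = -w_1, w_{i-1} = w_i + c_i w_1 (2 ≤ i ≤ N) are
determined by w_1 (uniqueness up to an integer multiple), and a solution with
w_1 ≠ 0 exists iff c_2 + ⋯ + c_N = 2. -/
theorem period_one_weight_function_classification (N : ℕ) (hN : 2 ≤ N)
    (c : ℕ → ℕ) :
    (∀ w : ℕ → ℤ, w N = -(w 1) →
      (∀ i, 2 ≤ i → i ≤ N → w (i - 1) = w i + (c i : ℤ) * w 1) →
      ∀ i, 1 ≤ i → i ≤ N →
        w i = (1 - ∑ j ∈ Finset.Icc 2 i, (c j : ℤ)) * w 1)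
    ∧ ((∃ w : ℕ → ℤ, w 1 ≠ 0 ∧ w N = -(w 1) ∧
        (∀ i, 2 ≤ i → i ≤ N → w (i - 1) = w i + (c i : ℤ) * w 1))
      ↔ ∑ j ∈ Finset.Icc 2 N, c j = 2) := by
  have key : ∀ w : ℕ → ℤ,
      (∀ i, 2 ≤ i → i ≤ N → w (i - 1) = w i + (c i : ℤ) * w 1) →
      ∀ i, 1 ≤ i → i ≤ N →
        w i = (1 - ∑ j ∈ Finset.Icc 2 i, (c j : ℤ)) * w 1 := by
    intro w hrec i hi1
    induction i, hi1 using Nat.le_induction with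
    | base => intro _; simp
    | succ i hi ih =>
      intro hle
      have h2 : 2 ≤ i + 1 := by omega
      have hr := hrec (i + 1) h2 hle
      have hi' : i + 1 - 1 = i := by omega
      rw [hi'] at hr
      have := ih (by omega)
      have hs := icc_sum_step (fun j => (c j : ℤ)) h2
      rw [hi'] at hs
      have : w (i + 1) = w i - (c (i + 1) : ℤ) * w 1 := by linarith
      rw [this, ih (by omega), hs]; ring
  refine ⟨fun w _ hrec => key w hrec, ?_⟩
  constructor
  · rintro ⟨w, hw1, hwN, hrec⟩
    have h := key w hrec N (by omega) le_rfl
    rw [hwN] at h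
    have : (∑ j ∈ Finset.Icc 2 N, (c j : ℤ)) = 2 := by
      have := mul_right_cancel₀ hw1 (by linarith : (-1 : ℤ) * w 1 = (1 - ∑ j ∈ Finset.Icc 2 N, (c j : ℤ)) * w 1)
      linarith
    exact_mod_cast this
  · intro hsum
    refine ⟨fun i => 1 - ∑ j ∈ Finset.Icc 2 i, (c j : ℤ), ?_, ?_, ?_⟩
    · simp
    · have : (∑ j ∈ Finset.Icc 2 N, (c j : ℤ)) = 2 := by exact_mod_cast hsum
      simp [this]
    · intro i h2 hle
      have hs := icc_sum_step (fun j => (c j : ℤ)) h2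
      simp only
      rw [hs]
      simp
      ring
end
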